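/- arXiv:2308.14285 — 10 statements merged into one kernel-verified Lean document; each statement's English description precedes it below -/
import Mathlib

section
/- Let R be a commutative Noetherian ring, M a finitely generated R-module, N a proper submodule of M, and p a maximal element (with respect to inclusion) of Ass_R(M/N). Then the submodule (N :_M p) = {x ∈ M : p•x ⊆ N} is a p-prime extension of N, i.e., N is a p-prime submodule of (N :_M p). -/
variable {R : Type*} [CommRing R] {M : Type*} [AddCommGroup M] [Module R M]

/-- The colon submodule `(N :_M I) = {x ∈ M | I • x ⊆ N}`. -/
def colonSubmodule (N : Submodule R M) (I : Ideal R) : Submodule R M where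
  carrier := {x | ∀ a ∈ I, a • x ∈ N}
  add_mem' := fun hx hy a ha => by simpa [smul_add] using N.add_mem (hx a ha) (hy a ha)
  zero_mem' := fun a _ => by simp
  smul_mem' := fun c x hx a ha => by
    rw [smul_comm]
    exact N.smul_mem c (hx a ha)

/-- `K` is a `p`-prime extension of `N`, i.e. `N` is a `p`-prime submodule of `K`. -/
def IsPrimeExt (p : Ideal R) (N K : Submodule R M) : Prop :=
  N < K ∧ N.colon K = p ∧ ∀ a : R, ∀ x ∈ K, a • x ∈ N → x ∈ N ∨ a ∈ p

/-- The associated primes of `T / N` for submodules `N ≤ T ≤ M`. -/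
def assOf (R : Type*) {M : Type*} [CommRing R] [AddCommGroup M] [Module R M]
    (N T : Submodule R M) : Set (Ideal R) :=
  associatedPrimes R ↥(T.map N.mkQ)

/-- `K` is a maximal `p`-prime extension of `N` inside `T`. -/
def IsMaximalPrimeExtIn (T : Submodule R M) (p : Ideal R) (N K : Submodule R M) : Prop :=
  K ≤ T ∧ IsPrimeExt p N K ∧ ∀ L ≤ T, IsPrimeExt p N L → ¬ K < L

/-- `K` is a regular `p`-prime extension of `N` inside `T`: a maximal `p`-prime
extension where `p` is a maximal element of `Ass (T/N)`. -/
def IsRegularPrimeExtIn (T : Submodule R M) (p : Ideal R) (N K : Submodule R M) : Prop :=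
  IsMaximalPrimeExtIn T p N K ∧ Maximal (· ∈ assOf R N T) p

/-- A regular prime extension (RPE) filtration inside `T` with primes `p i`. -/
def IsRPEFiltrationIn (T : Submodule R M) {n : ℕ}
    (F : Fin (n + 1) → Submodule R M) (p : Fin n → Ideal R) : Prop :=
  ∀ i : Fin n, IsRegularPrimeExtIn T (p i) (F i.castSucc) (F i.succ)

/-- The generalized prime ideal factorization of `N` in `T` is given by the multiset `s`:
there is an RPE filtration of `T` over `N` whose multiset of primes is `s`. -/
def HasGPIF (N T : Submodule R M) (s : Multiset (Ideal R)) : Prop :=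
  ∃ (n : ℕ) (F : Fin (n + 1) → Submodule R M) (p : Fin n → Ideal R),
    F 0 = N ∧ F (Fin.last n) = T ∧ IsRPEFiltrationIn T F p ∧ (List.ofFn p : Multiset (Ideal R)) = s

/-- If `p` is a maximal element of `Ass (M/N)` for a proper submodule `N`, then
`(N :_M p)` is a `p`-prime extension of `N`. -/
theorem colon_is_prime_ext {R : Type*} [CommRing R] [IsNoetherianRing R]
    {M : Type*} [AddCommGroup M] [Module R M] [Module.Finite R M]
    (N : Submodule R M) (hN : N ≠ ⊤) (p : Ideal R)
    (hp : Maximal (· ∈ associatedPrimes R (M ⧸ N)) p) :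
    IsPrimeExt p N (colonSubmodule N p) := by
  obtain ⟨hpr, xb, hxb⟩ := isAssociatedPrime_iff.mp hp.1
  obtain ⟨x, rfl⟩ := N.mkQ_surjective xb
  have hmk : ∀ z : M, N.mkQ z = 0 ↔ z ∈ N := fun z => by
    rw [Submodule.mkQ_apply, Submodule.Quotient.mk_eq_zero]
  have hx0 : N.mkQ x ≠ 0 := by
    intro h
    rw [h] at hxb
    exact hpr.ne_top (by
      rw [hxb, Ideal.eq_top_iff_one, Submodule.mem_colon_singleton, Submodule.mem_bot, one_smul])
  have hxN : x ∉ N := fun h => hx0 ((hmk x).mpr h)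
  have hann : ∀ a : R, a ∈ p ↔ a • x ∈ N := by
    intro a
    rw [hxb, Submodule.mem_colon_singleton, Submodule.mem_bot, ← map_smul, hmk]
  have hxK : x ∈ colonSubmodule N p := fun a ha => (hann a).mp ha
  have hNK : N ≤ colonSubmodule N p := fun y hy a _ => N.smul_mem a hy
  refine ⟨lt_of_le_of_ne hNK (fun h => hxN (h ▸ hxK)), ?_, ?_⟩
  · apply le_antisymm
    · intro r hr
      rw [Submodule.mem_colon] at hr
      exact (hann r).mpr (hr x hxK)
    · intro a ha
      rw [Submodule.mem_colon]
      exact fun y hy => hy a ha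
  · intro a y hy hay
    by_cases hyN : y ∈ N
    · exact Or.inl hyN
    right
    have hy0 : N.mkQ y ≠ 0 := fun h => hyN ((hmk y).mp h)
    obtain ⟨q, hq, hle⟩ := exists_le_isAssociatedPrime_of_isNoetherianRing R (N.mkQ y) hy0
    have hpq : p ≤ q := by
      intro b hb
      apply hle
      rw [Submodule.mem_colon_singleton, Submodule.mem_bot, ← map_smul, hmk]
      exact hy b hb
    have : q ≤ p := hp.2 hq hpq
    apply this
    apply hle
    rw [Submodule.mem_colon_singleton, Submodule.mem_bot, ← map_smul, hmk]
    exact hay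
end

section
/- Let R be a commutative Noetherian ring, M a finitely generated R-module, N a proper submodule of M, and p a maximal element of Ass_R(M/N). Then (N :_M p) is the unique maximal p-prime extension of N in M: every submodule K of M with N a p-prime submodule of K satisfies K ⊆ (N :_M p). -/
variable {R : Type*} [CommRing R] {M : Type*} [AddCommGroup M] [Module R M]

/-- If `p` is a maximal element of `Ass (M/N)`, then `(N :_M p)` is the unique
maximal `p`-prime extension of `N` in `M`: it is a `p`-prime extension and any
`p`-prime extension `K` of `N` in `M` satisfies `K ≤ (N :_M p)`. -/
theorem colon_is_unique_maximal_prime_ext {R : Type*} [CommRing R] [IsNoetherianRing R]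
    {M : Type*} [AddCommGroup M] [Module R M] [Module.Finite R M]
    (N : Submodule R M) (hN : N ≠ ⊤) (p : Ideal R)
    (hp : Maximal (· ∈ associatedPrimes R (M ⧸ N)) p) :
    IsPrimeExt p N (colonSubmodule N p) ∧
      ∀ K : Submodule R M, IsPrimeExt p N K → K ≤ colonSubmodule N p := by
  obtain ⟨hprime, y, hy⟩ := isAssociatedPrime_iff.mp hp.prop
  obtain ⟨x, rfl⟩ := N.mkQ_surjective y
  have key : ∀ a : R, a ∈ p ↔ a • x ∈ N := by
    intro a
    rw [hy, Submodule.mem_colon_singleton, Submodule.mem_bot, ← map_smul]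
    exact N.mkQ_apply (a • x) ▸ Submodule.Quotient.mk_eq_zero N
  have hxN : x ∉ N := fun h =>
    hprime.ne_top ((Ideal.eq_top_iff_one p).mpr ((key 1).mpr (by simpa)))
  have hxC : x ∈ colonSubmodule N p := fun a ha => (key a).mp ha
  have hNC : N ≤ colonSubmodule N p := fun z hz a _ => N.smul_mem a hz
  -- the primality property for the colon submodule
  have hprimality : ∀ a : R, ∀ z ∈ colonSubmodule N p, a • z ∈ N → z ∈ N ∨ a ∈ p := by
    intro a z hz haz
    by_contra hcon
    push_neg at hcon
    obtain ⟨hzN, hap⟩ := hcon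
    have hz0 : N.mkQ z ≠ 0 := fun h => hzN ((Submodule.Quotient.mk_eq_zero N).mp h)
    obtain ⟨q, hq, hle⟩ := exists_le_isAssociatedPrime_of_isNoetherianRing R (N.mkQ z) hz0
    have hmem : ∀ b : R, b • z ∈ N → b ∈ q := by
      intro b hb
      apply hle
      rw [Submodule.mem_colon_singleton, Submodule.mem_bot, ← map_smul]
      exact (Submodule.Quotient.mk_eq_zero N).mpr hb
    have hpq : p ≤ q := fun b hb => hmem b (hz b hb)
    have : q ≤ p := hp.2 hq hpq
    exact hap (this (hmem a haz))
  refine ⟨⟨lt_of_le_of_ne hNC (fun h => hxN (h ▸ hxC)), ?_, hprimality⟩, ?_⟩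
  · -- N.colon (colonSubmodule N p) = p
    apply le_antisymm
    · intro a ha
      exact (key a).mpr (Submodule.mem_colon.mp ha x hxC)
    · intro a ha
      exact Submodule.mem_colon.mpr fun z hz => hz a ha
  · intro K ⟨hNK, hcolon, hKprime⟩ z hzK a ha
    rw [← hcolon] at ha
    exact Submodule.mem_colon.mp ha z hzK
end

section
/- Let R be a commutative Noetherian ring and N = M₀ ⊂ M₁ ⊂ ⋯ ⊂ Mₙ = M a filtration of submodules of a finitely generated R-module M such that each Mᵢ is a maximal pᵢ-prime extension of Mᵢ₋₁ in M. Then for each 1 ≤ i ≤ n, Ass_R(M/M_{i-1}) = {p_i, …, p_n}; in particular Ass_R(M/N) = {p₁, …, pₙ}. -/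
variable {R : Type*} [CommRing R] {M : Type*} [AddCommGroup M] [Module R M]

section Aux

variable {W : Type*} [AddCommGroup W] [Module R W]

private lemma isAP_of (q : Ideal R) (hq : q.IsPrime) (x : W)
    (h : ∀ u : R, u • x = 0 ↔ u ∈ q) : IsAssociatedPrime q W :=
  ⟨hq, x, by
    have hc : (⊥ : Submodule R W).colon {x} = q := by
      ext u; rw [Submodule.mem_colon_singleton, Submodule.mem_bot]; exact h u
    rw [hc, hq.radical]⟩

/-- Key elementary lemma: if `(B : x) = q` (a prime), `p` kills `B`, nonzero elements of `B`
are only killed by elements of `p`, and some `r₁ • x ≠ 0` is killed by some `a ∉ p`, then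
`q` is the annihilator of `r₁ • x`, hence an associated prime of `W`. -/
private lemma assoc_of_colon (B : Submodule R W) (p q : Ideal R)
    (h3 : ∀ a : R, ∀ x ∈ B, a • x = (0 : W) → x = 0 ∨ a ∈ p)
    (hq : q.IsPrime) (x : W) (hx : ∀ u : R, u • x ∈ B ↔ u ∈ q)
    (a : R) (hap : a ∉ p) (r₁ : R) (hw0 : r₁ • x ≠ 0) (haw : a • (r₁ • x) = 0) :
    IsAssociatedPrime q W := by
  set w := r₁ • x with hw
  have claimA : ∀ s : R, s • w ∈ B → s • w = 0 := by
    intro s hs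
    by_contra hne
    have h0 : a • (s • w) = 0 := by rw [smul_comm, haw, smul_zero]
    rcases h3 a (s • w) hs h0 with h | h
    · exact hne h
    · exact hap h
  have hr₁q : r₁ ∉ q := by
    intro hr
    have hwB : w ∈ B := (hx r₁).mpr hr
    have := claimA 1 (by simpa using hwB)
    rw [one_smul] at this
    exact hw0 this
  refine isAP_of q hq w fun u => ⟨fun h0 => ?_, fun huq => ?_⟩
  · have : (u * r₁) • x ∈ B := by
      rw [mul_smul, ← hw, h0]; exact B.zero_mem
    rcases hq.mem_or_mem ((hx _).mp this) with h | h
    · exact h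
    · exact absurd h hr₁q
  · have huw : u • w ∈ B := by
      rw [hw, smul_comm]
      exact B.smul_mem r₁ ((hx u).mpr huq)
    exact claimA u huw

private lemma mem_ass_of_quot [IsNoetherianRing R] (B : Submodule R W) (p : Ideal R)
    (h2a : ∀ a ∈ p, ∀ x ∈ B, a • x = (0 : W))
    (h3 : ∀ a : R, ∀ x ∈ B, a • x = (0 : W) → x = 0 ∨ a ∈ p)
    (h4 : ∀ C : Submodule R W, B < C → (∀ a ∈ p, ∀ y ∈ C, a • y = (0 : W)) →
      (∀ a : R, ∀ y ∈ C, a • y = (0 : W) → y = 0 ∨ a ∈ p) → False)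
    (hp : IsAssociatedPrime p W)
    (q : Ideal R) (hq : q ∈ associatedPrimes R (W ⧸ B)) : q ∈ associatedPrimes R W := by
  obtain ⟨hqp, x', hann⟩ := isAssociatedPrime_iff.mp hq
  obtain ⟨x, rfl⟩ := B.mkQ_surjective x'
  have hx : ∀ u : R, u • x ∈ B ↔ u ∈ q := by
    intro u
    rw [hann, Submodule.mem_colon_singleton, Submodule.mem_bot, ← map_smul,
      Submodule.mkQ_apply, Submodule.Quotient.mk_eq_zero]
  have hxB : x ∉ B := by
    intro h
    exact hqp.ne_top (q.eq_top_of_isUnit_mem ((hx 1).mp (by simpa using h)) isUnit_one)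
  by_cases hpq : q = p
  · exact hpq ▸ hp
  by_cases htq : ∃ t ∈ p, t ∉ q
  · obtain ⟨t, htp, htq⟩ := htq
    refine isAP_of q hqp (t • x) fun u => ⟨fun h0 => ?_, fun huq => ?_⟩
    · have : (u * t) • x ∈ B := by rw [mul_smul, h0]; exact B.zero_mem
      rcases hqp.mem_or_mem ((hx _).mp this) with h | h
      · exact h
      · exact absurd h htq
    · rw [smul_comm]
      exact h2a t htp _ ((hx u).mpr huq)
  · push_neg at htq
    have hple : p ≤ q := htq
    have hplt : p < q := lt_of_le_of_ne hple fun h => hpq h.symm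
    obtain ⟨a, haq, hap⟩ := SetLike.exists_of_lt hplt
    by_cases hpx : ∃ t ∈ p, t • x ≠ 0
    · obtain ⟨t, htp, htx⟩ := hpx
      refine assoc_of_colon B p q h3 hqp x hx a hap t htx ?_
      rw [smul_comm]
      exact h2a t htp _ ((hx a).mpr haq)
    · push_neg at hpx
      set C := B ⊔ (R ∙ x) with hC
      have hxC : x ∈ C := Submodule.mem_sup_right (Submodule.mem_span_singleton_self x)
      have hBC : B < C := lt_of_le_of_ne le_sup_left (fun h => hxB (h ▸ hxC))
      have hmemC : ∀ y ∈ C, ∃ b ∈ B, ∃ r : R, y = b + r • x := by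
        intro y hy
        obtain ⟨b, hb, z, hz, rfl⟩ := Submodule.mem_sup.mp hy
        obtain ⟨r, rfl⟩ := Submodule.mem_span_singleton.mp hz
        exact ⟨b, hb, r, rfl⟩
      have hpC : ∀ a' ∈ p, ∀ y ∈ C, a' • y = (0 : W) := by
        intro a' ha' y hy
        obtain ⟨b, hb, r, rfl⟩ := hmemC y hy
        rw [smul_add, h2a a' ha' b hb, smul_comm, hpx a' ha', smul_zero, add_zero]
      by_cases htf : ∀ a' : R, ∀ y ∈ C, a' • y = (0 : W) → y = 0 ∨ a' ∈ p
      · exact (h4 C hBC hpC htf).elim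
      · push_neg at htf
        obtain ⟨a₀, y, hyC, hy0, hyne, ha₀p⟩ := htf
        obtain ⟨b, hb, r, rfl⟩ := hmemC y hyC
        have hrq : r ∉ q := by
          intro hr
          have hyB : b + r • x ∈ B := B.add_mem hb ((hx r).mpr hr)
          rcases h3 a₀ _ hyB hy0 with h | h
          · exact hyne h
          · exact ha₀p h
        have hxc : ∀ u : R, u • (b + r • x) ∈ B ↔ u ∈ q := by
          intro u
          constructor
          · intro h
            rw [smul_add] at h
            have : u • (r • x) ∈ B := by
              have := B.sub_mem h (B.smul_mem u hb)
              simpa using this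
            rw [smul_comm, ← mul_smul] at this
            rcases hqp.mem_or_mem ((hx _).mp this) with h' | h'
            · exact absurd h' hrq
            · exact h'
          · intro hu
            rw [smul_add]
            refine B.add_mem (B.smul_mem u hb) ?_
            rw [smul_comm]
            exact B.smul_mem r ((hx u).mpr hu)
        refine assoc_of_colon B p q h3 hqp (b + r • x) hxc a₀ ha₀p 1 (by simpa using hyne)
          (by simpa using hy0)

private lemma step_ass [IsNoetherianRing R] (B : Submodule R W) (p : Ideal R)
    (h1 : B ≠ ⊥)
    (h2a : ∀ a ∈ p, ∀ x ∈ B, a • x = (0 : W))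
    (h3 : ∀ a : R, ∀ x ∈ B, a • x = (0 : W) → x = 0 ∨ a ∈ p)
    (h4 : ∀ C : Submodule R W, B < C → (∀ a ∈ p, ∀ y ∈ C, a • y = (0 : W)) →
      (∀ a : R, ∀ y ∈ C, a • y = (0 : W) → y = 0 ∨ a ∈ p) → False) :
    associatedPrimes R W = insert p (associatedPrimes R (W ⧸ B)) := by
  obtain ⟨b₀, hb₀B, hb₀⟩ := B.ne_bot_iff.mp h1
  have hpprime : p.IsPrime := by
    constructor
    · intro h
      exact hb₀ (by simpa using h2a 1 (h ▸ Submodule.mem_top) b₀ hb₀B)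
    · intro a b hab
      by_contra hcon
      push_neg at hcon
      obtain ⟨ha, hb⟩ := hcon
      have h0 : a • (b • b₀) = 0 := by
        rw [← mul_smul]
        exact h2a _ hab b₀ hb₀B
      rcases h3 a _ (B.smul_mem b hb₀B) h0 with h | h
      · rcases h3 b b₀ hb₀B h with h' | h'
        · exact hb₀ h'
        · exact hb h'
      · exact ha h
  have hp : IsAssociatedPrime p W := by
    refine isAP_of p hpprime b₀ fun u => ⟨fun h => ?_, fun h => h2a u h b₀ hb₀B⟩
    rcases h3 u b₀ hb₀B h with h' | h'
    · exact (hb₀ h').elim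
    · exact h'
  ext q
  simp only [Set.mem_insert_iff]
  constructor
  · rintro hq'
    obtain ⟨hqp, x, hann⟩ := isAssociatedPrime_iff.mp hq'
    have hxq : ∀ u : R, u • x = 0 ↔ u ∈ q := fun u => by
      rw [hann, Submodule.mem_colon_singleton, Submodule.mem_bot]
    by_cases hrx : ∃ r : R, r • x ∈ B ∧ r • x ≠ 0
    · left
      obtain ⟨r, hrB, hr0⟩ := hrx
      have hrq : r ∉ q := fun h => hr0 ((hxq r).mpr h)
      refine le_antisymm (fun u hu => ?_) (fun t ht => ?_)
      · have h0 : u • (r • x) = 0 := by rw [smul_comm, (hxq u).mpr hu, smul_zero]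
        rcases h3 u _ hrB h0 with h | h
        · exact (hr0 h).elim
        · exact h
      · have h0 : (t * r) • x = 0 := by rw [mul_smul]; exact h2a t ht _ hrB
        rcases hqp.mem_or_mem ((hxq _).mp h0) with h | h
        · exact h
        · exact absurd h hrq
    · right
      push_neg at hrx
      refine isAP_of q hqp (B.mkQ x) fun u => ?_
      rw [← map_smul, Submodule.mkQ_apply, Submodule.Quotient.mk_eq_zero]
      exact ⟨fun h => (hxq u).mp (hrx u h), fun h => (hxq u).mpr h ▸ B.zero_mem⟩
  · rintro (rfl | hq)
    · exact hp
    · exact mem_ass_of_quot B p h2a h3 h4 hp q hq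

private lemma step_quot [IsNoetherianRing R] (A B₀ : Submodule R W) (p : Ideal R)
    (h : IsMaximalPrimeExtIn ⊤ p A B₀) :
    associatedPrimes R (W ⧸ A) = insert p (associatedPrimes R (W ⧸ B₀)) := by
  obtain ⟨-, ⟨hlt, hcolon, hprime⟩, hmax⟩ := h
  have hAB : A ≤ B₀ := hlt.le
  set B : Submodule R (W ⧸ A) := B₀.map A.mkQ with hB
  have hmemB : ∀ y ∈ B, ∃ x ∈ B₀, A.mkQ x = y := fun y hy => by
    obtain ⟨x, hx, rfl⟩ := hy
    exact ⟨x, hx, rfl⟩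
  have h1 : B ≠ ⊥ := by
    obtain ⟨x, hxB, hxA⟩ := SetLike.exists_of_lt hlt
    intro hb
    apply hxA
    have hmem : A.mkQ x ∈ B := Submodule.mem_map_of_mem hxB
    rw [hb, Submodule.mem_bot] at hmem
    exact (Submodule.Quotient.mk_eq_zero A).mp hmem
  have h2a : ∀ a ∈ p, ∀ y ∈ B, a • y = (0 : W ⧸ A) := by
    intro a ha y hy
    obtain ⟨x, hxB, rfl⟩ := hmemB y hy
    have : a • x ∈ A := Submodule.mem_colon.mp (hcolon ▸ ha) x hxB
    rw [← map_smul, Submodule.mkQ_apply, Submodule.Quotient.mk_eq_zero]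
    exact this
  have h3 : ∀ a : R, ∀ y ∈ B, a • y = (0 : W ⧸ A) → y = 0 ∨ a ∈ p := by
    intro a y hy h0
    obtain ⟨x, hxB, rfl⟩ := hmemB y hy
    rw [← map_smul, Submodule.mkQ_apply, Submodule.Quotient.mk_eq_zero] at h0
    rcases hprime a x hxB h0 with h | h
    · left
      rw [Submodule.mkQ_apply, Submodule.Quotient.mk_eq_zero]
      exact h
    · exact Or.inr h
  have h4 : ∀ C : Submodule R (W ⧸ A), B < C →
      (∀ a ∈ p, ∀ y ∈ C, a • y = (0 : W ⧸ A)) →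
      (∀ a : R, ∀ y ∈ C, a • y = (0 : W ⧸ A) → y = 0 ∨ a ∈ p) → False := by
    intro C hBC hpC htf
    set L := Submodule.comap A.mkQ C with hL
    have hB₀L : B₀ ≤ L := fun x hx => Submodule.mem_comap.mpr (hBC.le (Submodule.mem_map_of_mem hx))
    have hB₀L' : B₀ < L := by
      obtain ⟨y', hyC, hyB⟩ := SetLike.exists_of_lt hBC
      obtain ⟨y, rfl⟩ := A.mkQ_surjective y'
      refine lt_of_le_of_ne hB₀L fun he => hyB ?_
      have : y ∈ L := Submodule.mem_comap.mpr hyC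
      rw [← he] at this
      exact Submodule.mem_map_of_mem this
    refine hmax L le_top ⟨lt_of_lt_of_le hlt hB₀L, ?_, ?_⟩ hB₀L'
    · ext a
      rw [Submodule.mem_colon]
      constructor
      · intro ha
        obtain ⟨z, hzB, hz0⟩ := B.ne_bot_iff.mp h1
        obtain ⟨x₀, hx₀, rfl⟩ := hmemB z hzB
        have hx₀L : x₀ ∈ L := hB₀L hx₀
        have h0 : a • A.mkQ x₀ = 0 := by
          rw [← map_smul, Submodule.mkQ_apply, Submodule.Quotient.mk_eq_zero]
          exact ha x₀ hx₀L
        rcases htf a _ (hBC.le hzB) h0 with h | h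
        · exact (hz0 h).elim
        · exact h
      · intro ha x hxL
        have h0 : a • A.mkQ x = 0 := hpC a ha _ (Submodule.mem_comap.mp hxL)
        rw [← map_smul, Submodule.mkQ_apply, Submodule.Quotient.mk_eq_zero] at h0
        exact h0
    · intro a x hxL haxA
      have h0 : a • A.mkQ x = 0 := by
        rw [← map_smul, Submodule.mkQ_apply, Submodule.Quotient.mk_eq_zero]
        exact haxA
      rcases htf a _ (Submodule.mem_comap.mp hxL) h0 with h | h
      · left
        rw [Submodule.mkQ_apply, Submodule.Quotient.mk_eq_zero] at h
        exact h
      · exact Or.inr h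
  rw [step_ass B p h1 h2a h3 h4,
    LinearEquiv.AssociatedPrimes.eq (Submodule.quotientQuotientEquivQuotient A B₀ hAB)]

end Aux

/-- If `N = F 0 ⊂ F 1 ⊂ ⋯ ⊂ F n = M` is a filtration where each step is a maximal
`p i`-prime extension in `M`, then `Ass (M / F i) = {p i, …, p (n-1)}` for each `i`;
in particular `Ass (M/N) = {p 0, …, p (n-1)}`. -/
theorem ass_of_maximal_prime_ext_filtration {R : Type*} [CommRing R] [IsNoetherianRing R]
    {M : Type*} [AddCommGroup M] [Module R M] [Module.Finite R M]
    {n : ℕ} (N : Submodule R M) (F : Fin (n + 1) → Submodule R M) (p : Fin n → Ideal R)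
    (h0 : F 0 = N) (hlast : F (Fin.last n) = ⊤)
    (hstep : ∀ i : Fin n, IsMaximalPrimeExtIn ⊤ (p i) (F i.castSucc) (F i.succ)) :
    (∀ i : Fin n, associatedPrimes R (M ⧸ F i.castSucc) = p '' {j | i ≤ j}) ∧
      associatedPrimes R (M ⧸ N) = Set.range p := by
  have key : ∀ i : Fin (n + 1),
      associatedPrimes R (M ⧸ F i) = p '' {j : Fin n | i ≤ j.castSucc} := by
    intro i
    induction i using Fin.reverseInduction with
    | last =>
      have hempty : {j : Fin n | Fin.last n ≤ j.castSucc} = ∅ := by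
        ext j
        simp [(Fin.castSucc_lt_last j).not_ge, (Fin.castSucc_lt_last j).ne]
      rw [hlast, hempty, Set.image_empty]
      have : Subsingleton (M ⧸ (⊤ : Submodule R M)) :=
        Submodule.Quotient.subsingleton_iff.mpr rfl
      exact associatedPrimes.eq_empty_of_subsingleton
    | cast i ih =>
      rw [step_quot (F i.castSucc) (F i.succ) (p i) (hstep i), ih, ← Set.image_insert_eq]
      have hset : insert i {j : Fin n | i.succ ≤ j.castSucc} =
          {j : Fin n | i.castSucc ≤ j.castSucc} := by
        ext j
        simp only [Set.mem_insert_iff, Set.mem_setOf_eq, Fin.succ_le_castSucc_iff,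
          Fin.castSucc_le_castSucc_iff]
        constructor
        · rintro (rfl | h)
          · exact le_refl j
          · exact h.le
        · intro h
          rcases eq_or_lt_of_le h with h' | h'
          · exact Or.inl h'.symm
          · exact Or.inr h'
      rw [hset]
  constructor
  · intro i
    have := key i.castSucc
    simpa only [Fin.castSucc_le_castSucc_iff] using this
  · have := key 0
    rw [h0] at this
    rw [this]
    have : {j : Fin n | (0 : Fin (n + 1)) ≤ j.castSucc} = Set.univ := by
      ext j; simp [Fin.zero_le]
    rw [this, Set.image_univ]
end

section
/- Let R be a commutative Noetherian ring, M a finitely generated R-module, N a proper submodule with a regular prime extension filtration N = M₀ ⊂^{p₁} M₁ ⊂ ⋯ ⊂^{pₙ} Mₙ = M. Then for every 1 ≤ i ≤ n, M_i = {x ∈ M : p₁⋯p_i • x ⊆ N} = (N :_M p₁⋯p_i). -/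
variable {R : Type*} [CommRing R] {M : Type*} [AddCommGroup M] [Module R M]

lemma mem_colonSubmodule {N : Submodule R M} {I : Ideal R} {x : M} :
    x ∈ colonSubmodule N I ↔ ∀ a ∈ I, a • x ∈ N := Iff.rfl

lemma colonSubmodule_one (N : Submodule R M) : colonSubmodule N 1 = N := by
  ext x
  constructor
  · intro h
    simpa using h 1 (by simp)
  · intro h a _
    exact N.smul_mem a h

lemma colonSubmodule_mul (N : Submodule R M) (I J : Ideal R) :
    colonSubmodule N (I * J) = colonSubmodule (colonSubmodule N I) J := by
  ext x
  constructor
  · intro h b hb a ha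
    rw [← mul_smul]
    exact h (a * b) (Ideal.mul_mem_mul ha hb)
  · intro h c hc
    refine Submodule.mul_induction_on hc (fun a ha b hb => ?_) (fun y z hy hz => ?_)
    · rw [mul_smul]
      exact h b hb a ha
    · rw [add_smul]
      exact N.add_mem hy hz

lemma regular_ext_eq_colon [IsNoetherianRing R] {N' K : Submodule R M} {q : Ideal R}
    (h : IsRegularPrimeExtIn ⊤ q N' K) : K = colonSubmodule N' q := by
  obtain ⟨⟨-, ⟨hlt, hcolon, hprime⟩, hmax⟩, hqmax⟩ := h
  obtain ⟨hqprime, xbar, hxbar⟩ := isAssociatedPrime_iff.mp hqmax.prop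
  -- key fact: a • x ∈ N' ↔ a ∈ q, where x lifts xbar
  obtain ⟨x, hx⟩ := N'.mkQ_surjective xbar.val
  have hann : ∀ a : R, a • x ∈ N' ↔ a ∈ q := by
    intro a
    rw [hxbar, Submodule.mem_colon_singleton, Submodule.mem_bot]
    rw [← Subtype.coe_inj]
    push_cast
    rw [← hx, ← map_smul, Submodule.mkQ_apply, Submodule.Quotient.mk_eq_zero]
  have hxN : x ∉ N' := by
    intro hxN
    exact hqprime.ne_top (Ideal.eq_top_iff_one _ |>.2 ((hann 1).1 (by simpa using hxN)))
  have hxL : x ∈ colonSubmodule N' q := fun a ha => (hann a).2 ha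
  -- L is a q-prime extension of N'
  have hext : IsPrimeExt q N' (colonSubmodule N' q) := by
    refine ⟨lt_of_le_of_ne (fun y hy a _ => N'.smul_mem a hy) (fun he => hxN (he ▸ hxL)), ?_, ?_⟩
    · apply le_antisymm
      · intro r hr
        exact (hann r).1 (Submodule.mem_colon.1 hr x hxL)
      · intro r hr
        exact Submodule.mem_colon.2 fun y hy => hy r hr
    · intro a z hz hazN
      by_cases hzN : z ∈ N'
      · exact Or.inl hzN
      right
      set zbar : ↥((⊤ : Submodule R M).map N'.mkQ) :=
        ⟨N'.mkQ z, Submodule.mem_map_of_mem trivial⟩ with hzbar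
      have hzbar0 : zbar ≠ 0 := by
        intro h0
        apply hzN
        have : N'.mkQ z = 0 := congrArg Subtype.val h0
        rwa [Submodule.mkQ_apply, Submodule.Quotient.mk_eq_zero] at this
      have hm : ∀ a : R, a • z ∈ N' ↔ a • zbar = 0 := by
        intro a
        rw [← Subtype.coe_inj]
        push_cast
        rw [← map_smul, Submodule.mkQ_apply, Submodule.Quotient.mk_eq_zero]
      obtain ⟨P, hP, hPle⟩ := exists_le_isAssociatedPrime_of_isNoetherianRing R zbar hzbar0
      have hqP : q ≤ P := by
        intro b hb
        exact hPle (Submodule.mem_colon_singleton.2 (by rw [Submodule.mem_bot]; exact (hm b).1 (hz b hb)))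
      have hPq : P = q := hqmax.eq_of_ge hP hqP
      rw [← hPq]
      exact hPle (Submodule.mem_colon_singleton.2 (by rw [Submodule.mem_bot]; exact (hm a).1 hazN))
  have hKL : K ≤ colonSubmodule N' q := by
    intro y hy a ha
    exact Submodule.mem_colon.1 (hcolon ▸ ha : a ∈ N'.colon K) y hy
  exact hKL.lt_or_eq.resolve_left (hmax _ le_top hext)

/-- In an RPE filtration `N = F 0 ⊂^{p 0} F 1 ⊂ ⋯ ⊂ F n = M`, each term `F (i+1)`
equals the colon submodule `(N :_M p 0 ⋯ p i)`. -/
theorem rpe_filtration_terms_eq_colon {R : Type*} [CommRing R] [IsNoetherianRing R]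
    {M : Type*} [AddCommGroup M] [Module R M] [Module.Finite R M]
    {n : ℕ} (N : Submodule R M) (hN : N ≠ ⊤)
    (F : Fin (n + 1) → Submodule R M) (p : Fin n → Ideal R)
    (h0 : F 0 = N) (hlast : F (Fin.last n) = ⊤)
    (hF : IsRPEFiltrationIn ⊤ F p) :
    ∀ i : Fin n,
      F i.succ = colonSubmodule N (∏ j ∈ Finset.univ.filter (fun j => j ≤ i), p j) := by
  have key : ∀ k : ℕ, ∀ hk : k ≤ n,
      F ⟨k, Nat.lt_succ_of_le hk⟩ =
        colonSubmodule N (∏ j ∈ Finset.univ.filter (fun j : Fin n => (j : ℕ) < k), p j) := by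
    intro k
    induction k with
    | zero =>
      intro hk
      have : Finset.univ.filter (fun j : Fin n => (j : ℕ) < 0) = ∅ := by
        simp
      rw [this, Finset.prod_empty, colonSubmodule_one, ← h0]
      congr 1
    | succ k ih =>
      intro hk
      have hkn : k < n := hk
      set i : Fin n := ⟨k, hkn⟩ with hi
      have hstep := regular_ext_eq_colon (hF i)
      have hcast : i.castSucc = ⟨k, Nat.lt_succ_of_le (Nat.le_of_lt hkn)⟩ := Fin.ext rfl
      have hsucc : i.succ = ⟨k + 1, Nat.lt_succ_of_le hk⟩ := Fin.ext rfl
      rw [hsucc, hcast, ih (Nat.le_of_lt hkn)] at hstep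
      have hfilter : Finset.univ.filter (fun j : Fin n => (j : ℕ) < k + 1) =
          insert i (Finset.univ.filter (fun j : Fin n => (j : ℕ) < k)) := by
        ext j
        simp only [Finset.mem_filter, Finset.mem_insert, Finset.mem_univ, true_and,
          Nat.lt_succ_iff_lt_or_eq, Fin.ext_iff, hi]
        tauto
      have hnotmem : i ∉ Finset.univ.filter (fun j : Fin n => (j : ℕ) < k) := by
        simp [hi]
      rw [hstep, hfilter, Finset.prod_insert hnotmem, mul_comm, colonSubmodule_mul]
  intro i
  have h1 : i.succ = ⟨(i : ℕ) + 1, Nat.lt_succ_of_le i.isLt⟩ := Fin.ext rfl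
  have hfilter : Finset.univ.filter (fun j : Fin n => j ≤ i) =
      Finset.univ.filter (fun j : Fin n => (j : ℕ) < (i : ℕ) + 1) := by
    ext j
    simp only [Finset.mem_filter, Finset.mem_univ, true_and, Fin.le_def, Nat.lt_succ_iff]
  rw [h1, key ((i : ℕ) + 1) i.isLt, hfilter]
end

section
/- Let R be a commutative Noetherian ring, M a finitely generated R-module, and N a proper submodule of M. If a submodule K of M occurs in some regular prime extension filtration of M over N, then the generalized prime ideal factorization satisfies P_M(N) = P_M(K) · P_K(N). -/
variable {R : Type*} [CommRing R] {M : Type*} [AddCommGroup M] [Module R M]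

/-- element of T/N from x ∈ T -/
def qElt (N T : Submodule R M) (x : M) (hx : x ∈ T) : ↥(T.map N.mkQ) :=
  ⟨N.mkQ x, ⟨x, hx, rfl⟩⟩

lemma qElt_eq_zero_iff {N T : Submodule R M} {x : M} (hx : x ∈ T) :
    qElt N T x hx = 0 ↔ x ∈ N := by
  simp [qElt, Subtype.ext_iff, Submodule.Quotient.mk_eq_zero]

lemma mem_ann_qElt {N T : Submodule R M} {x : M} (hx : x ∈ T) {r : R} :
    r ∈ (R ∙ (qElt N T x hx)).annihilator ↔ r • x ∈ N := by
  rw [Submodule.mem_annihilator_span_singleton]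
  rw [show r • qElt N T x hx = qElt N T (r • x) (T.smul_mem r hx) from rfl,
    qElt_eq_zero_iff]

lemma mem_colon_qElt {N T : Submodule R M} {x : M} (hx : x ∈ T) {r : R} :
    r ∈ (⊥ : Submodule R ↥(T.map N.mkQ)).colon {qElt N T x hx} ↔ r • x ∈ N := by
  rw [Submodule.mem_colon_singleton, Submodule.mem_bot,
    show r • qElt N T x hx = qElt N T (r • x) (T.smul_mem r hx) from rfl, qElt_eq_zero_iff]

lemma mem_assOf_of_witness {N T : Submodule R M} {q : Ideal R} (hq : q.IsPrime)
    {x : M} (hx : x ∈ T) (hw : ∀ r : R, r • x ∈ N ↔ r ∈ q) : q ∈ assOf R N T :=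
  have e : (⊥ : Submodule R ↥(T.map N.mkQ)).colon {qElt N T x hx} = q :=
    Ideal.ext fun r => by rw [mem_colon_qElt hx]; exact hw r
  ⟨hq, qElt N T x hx, by rw [e, hq.radical]⟩

lemma assOf_witness [IsNoetherianRing R] {N T : Submodule R M} {q : Ideal R} (hq : q ∈ assOf R N T) :
    ∃ x ∈ T, ∀ r : R, r • x ∈ N ↔ r ∈ q := by
  obtain ⟨hq1, y, hy⟩ := (isAssociatedPrime_iff (M := ↥(T.map N.mkQ))).mp hq
  obtain ⟨x, hxT, hxy⟩ := y.2
  refine ⟨x, hxT, fun r => ?_⟩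
  have hyq : y = qElt N T x hxT := Subtype.ext hxy.symm
  rw [hyq] at hy
  rw [hy, mem_colon_qElt hxT]

lemma exists_assOf_ge [IsNoetherianRing R] {N T : Submodule R M} {x : M}
    (hx : x ∈ T) (hxN : x ∉ N) :
    ∃ w ∈ assOf R N T, ∀ r : R, r • x ∈ N → r ∈ w := by
  have h0 : qElt N T x hx ≠ 0 := by rw [Ne, qElt_eq_zero_iff]; exact hxN
  obtain ⟨P, hP, hle⟩ := exists_le_isAssociatedPrime_of_isNoetherianRing R _ h0
  exact ⟨P, hP, fun r hr => hle ((mem_colon_qElt hx).mpr hr)⟩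

lemma assOf_mono {N T T' : Submodule R M} (h : T ≤ T') : assOf R N T ⊆ assOf R N T' :=
  associatedPrimes.subset_of_injective (f := Submodule.inclusion (Submodule.map_mono h))
    (Submodule.inclusion_injective _)

def regExt (N : Submodule R M) (q : Ideal R) (T : Submodule R M) : Submodule R M :=
  colonSubmodule N q ⊓ T

lemma mem_regExt {N T : Submodule R M} {q : Ideal R} {x : M} :
    x ∈ regExt N q T ↔ (∀ a ∈ q, a • x ∈ N) ∧ x ∈ T := Iff.rfl

lemma isPrimeExt_regExt [IsNoetherianRing R] {N T : Submodule R M} (hNT : N ≤ T)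
    {q : Ideal R} (hq : Maximal (· ∈ assOf R N T) q) :
    IsPrimeExt q N (regExt N q T) := by
  obtain ⟨x, hxT, hw⟩ := assOf_witness hq.1
  have hqprime : q.IsPrime := hq.1.1
  have hxN : x ∉ N := fun h =>
    hqprime.ne_top (Ideal.eq_top_iff_one _ |>.mpr ((hw 1).mp (by simpa using h)))
  have hxE : x ∈ regExt N q T := ⟨fun a ha => (hw a).mpr ha, hxT⟩
  refine ⟨lt_of_le_of_ne (fun y hy => ⟨fun a _ => N.smul_mem a hy, hNT hy⟩)
    (fun h => hxN (h ▸ hxE)), ?_, ?_⟩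
  · apply le_antisymm
    · intro r hr
      rw [Submodule.mem_colon] at hr
      exact (hw r).mp (hr x hxE)
    · intro a ha
      rw [Submodule.mem_colon]
      exact fun y hy => hy.1 a ha
  · intro a y hyE hay
    by_cases hyN : y ∈ N
    · exact Or.inl hyN
    · right
      obtain ⟨w, hw', hle⟩ := exists_assOf_ge hyE.2 hyN
      have hqw : q ≤ w := fun b hb => hle b (hyE.1 b hb)
      exact hq.2 hw' hqw (hle a hay)

lemma primeExt_le_regExt {N T K : Submodule R M} {q : Ideal R}
    (hKT : K ≤ T) (h : IsPrimeExt q N K) : K ≤ regExt N q T := by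
  intro x hx
  refine ⟨fun a ha => ?_, hKT hx⟩
  rw [← h.2.1] at ha
  exact Submodule.mem_colon.mp ha x hx

lemma isRegularPrimeExtIn_regExt [IsNoetherianRing R] {N T : Submodule R M} (hNT : N ≤ T)
    {q : Ideal R} (hq : Maximal (· ∈ assOf R N T) q) :
    IsRegularPrimeExtIn T q N (regExt N q T) :=
  ⟨⟨inf_le_right, isPrimeExt_regExt hNT hq, fun L hLT hL hlt =>
      absurd (primeExt_le_regExt hLT hL) (not_le_of_gt hlt)⟩, hq⟩

lemma eq_regExt_of_isRegularPrimeExtIn [IsNoetherianRing R] {N T K : Submodule R M} {q : Ideal R}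
    (h : IsRegularPrimeExtIn T q N K) : K = regExt N q T := by
  have hNT : N ≤ T := le_trans h.1.2.1.1.le h.1.1
  exact (primeExt_le_regExt h.1.1 h.1.2.1).lt_or_eq.resolve_left
    (h.1.2.2 _ inf_le_right (isPrimeExt_regExt hNT h.2))

lemma maximal_assOf_regExt [IsNoetherianRing R] {N T : Submodule R M} (hNT : N ≤ T)
    {p q : Ideal R} (hp : Maximal (· ∈ assOf R N T) p) (hq : Maximal (· ∈ assOf R N T) q)
    (hpq : p ≠ q) : Maximal (· ∈ assOf R (regExt N p T) T) q := by
  have hqprime : q.IsPrime := hq.1.1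
  have hpnq : ¬ p ≤ q := fun h => hpq (le_antisymm h (hp.2 hq.1 h))
  obtain ⟨s, hsp, hsq⟩ := SetLike.not_le_iff_exists.mp hpnq
  constructor
  · obtain ⟨y, hyT, hwy⟩ := assOf_witness hq.1
    refine mem_assOf_of_witness hqprime hyT (fun r => ?_)
    constructor
    · rintro ⟨h1, -⟩
      have : s * r ∈ q := (hwy (s * r)).mp (by rw [mul_smul]; exact h1 s hsp)
      exact (hqprime.mem_or_mem this).resolve_left hsq
    · intro hr
      have hN : r • y ∈ N := (hwy r).mpr hr
      exact ⟨fun a _ => N.smul_mem a hN, T.smul_mem r hyT⟩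
  · intro q' hq' hqq'
    have hq'prime : q'.IsPrime := hq'.1
    obtain ⟨z, hzT, hwz⟩ := assOf_witness hq'
    have hzE : z ∉ regExt N p T := fun h =>
      hq'prime.ne_top (Ideal.eq_top_iff_one _ |>.mpr ((hwz 1).mp (by simpa using h)))
    have : ¬ ∀ a ∈ p, a • z ∈ N := fun hall => hzE ⟨hall, hzT⟩
    push_neg at this
    obtain ⟨s', hs'p, hs'z⟩ := this
    obtain ⟨w, hwmem, hle⟩ := exists_assOf_ge (T.smul_mem s' hzT) hs'z
    have hq'w : q' ≤ w := by
      intro r hr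
      have : r • z ∈ regExt N p T := (hwz r).mpr hr
      exact hle r (by rw [smul_comm]; exact this.1 s' hs'p)
    exact le_trans hq'w (hq.2 hwmem (le_trans hqq' hq'w))

lemma regExt_comm {N T : Submodule R M} {p q : Ideal R} :
    regExt (regExt N p T) q T = regExt (regExt N q T) p T := by
  have key : ∀ p q : Ideal R, ∀ x : M, x ∈ regExt (regExt N p T) q T →
      x ∈ regExt (regExt N q T) p T := by
    rintro p q x ⟨h1, h2⟩
    refine ⟨fun a ha => ⟨fun b hb => ?_, T.smul_mem a h2⟩, h2⟩
    rw [smul_comm]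
    exact (h1 b hb).1 a ha
  exact le_antisymm (key p q) (key q p)

def GPL (T : Submodule R M) : Submodule R M → List (Ideal R) → Prop
  | N, [] => N = T
  | N, q :: l => ∃ K : Submodule R M, IsRegularPrimeExtIn T q N K ∧ GPL T K l

@[simp] lemma GPL_nil {T N : Submodule R M} : GPL T N ([] : List (Ideal R)) ↔ N = T := Iff.rfl

@[simp] lemma GPL_cons {T N : Submodule R M} {q : Ideal R} {l : List (Ideal R)} :
    GPL T N (q :: l) ↔ ∃ K : Submodule R M, IsRegularPrimeExtIn T q N K ∧ GPL T K l := Iff.rfl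

lemma GPL_top_eq_nil {T : Submodule R M} {l : List (Ideal R)} (h : GPL T T l) : l = [] := by
  cases l with
  | nil => rfl
  | cons q l =>
    obtain ⟨K, hreg, -⟩ := h
    exact absurd hreg.1.2.1.1 (not_lt_of_ge hreg.1.1)

lemma exists_maximal_assOf [IsNoetherianRing R] {N T : Submodule R M} (hNT : N ≤ T)
    (hne : N ≠ T) : ∃ q, Maximal (· ∈ assOf R N T) q := by
  obtain ⟨x, hxT, hxN⟩ := SetLike.exists_of_lt (hNT.lt_of_ne hne)
  obtain ⟨w, hw, -⟩ := exists_assOf_ge hxT hxN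
  obtain ⟨q, hqmem, hqmax⟩ :=
    set_has_maximal_iff_noetherian.mpr (by infer_instance) (assOf R N T) ⟨w, hw⟩
  exact ⟨q, hqmem, fun b hb hqb => by
    by_contra hc
    exact hqmax b hb (lt_of_le_not_ge hqb hc)⟩

lemma exists_GPL [IsNoetherianRing R] [Module.Finite R M] (T : Submodule R M) :
    ∀ N : Submodule R M, N ≤ T → ∃ l, GPL T N l := by
  intro N
  induction N using IsNoetherian.induction with
  | hgt N ih =>
    intro hNT
    by_cases h : N = T
    · exact ⟨[], h⟩
    · obtain ⟨q, hq⟩ := exists_maximal_assOf hNT h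
      have hreg := isRegularPrimeExtIn_regExt hNT hq
      obtain ⟨l, hl⟩ := ih _ hreg.1.2.1.1 hreg.1.1
      exact ⟨q :: l, regExt N q T, hreg, hl⟩

lemma GPL_unique_aux [IsNoetherianRing R] [Module.Finite R M] {T : Submodule R M} :
    ∀ n : ℕ, ∀ l₁ : List (Ideal R), l₁.length ≤ n → ∀ N : Submodule R M,
      ∀ l₂ : List (Ideal R), N ≤ T → GPL T N l₁ → GPL T N l₂ →
      (l₁ : Multiset (Ideal R)) = (l₂ : Multiset (Ideal R)) := by
  intro n
  induction n with
  | zero =>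
    intro l₁ hlen N l₂ hNT h1 h2
    rw [Nat.le_zero, List.length_eq_zero_iff] at hlen
    subst hlen
    rw [GPL_nil] at h1
    subst h1
    rw [GPL_top_eq_nil h2]
  | succ n ih =>
    intro l₁ hlen N l₂ hNT h1 h2
    cases l₁ with
    | nil =>
      rw [GPL_nil] at h1
      subst h1
      rw [GPL_top_eq_nil h2]
    | cons p l₁' =>
      cases l₂ with
      | nil =>
        rw [GPL_nil] at h2
        subst h2
        obtain ⟨K, hreg, -⟩ := h1
        exact absurd hreg.1.2.1.1 (not_lt_of_ge hreg.1.1)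
      | cons q l₂' =>
        obtain ⟨K₁, hreg₁, h1'⟩ := h1
        obtain ⟨K₂, hreg₂, h2'⟩ := h2
        have e1 : K₁ = regExt N p T := eq_regExt_of_isRegularPrimeExtIn hreg₁
        have e2 : K₂ = regExt N q T := eq_regExt_of_isRegularPrimeExtIn hreg₂
        have hlen' : l₁'.length ≤ n := by simpa using hlen
        by_cases hpq : p = q
        · subst hpq
          have hKK : K₁ = K₂ := e1.trans e2.symm
          subst hKK
          have := ih l₁' hlen' K₁ l₂' hreg₁.1.1 h1' h2'
          simpa using this
        · have hp := hreg₁.2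
          have hq := hreg₂.2
          have hqA : Maximal (· ∈ assOf R (regExt N p T) T) q :=
            maximal_assOf_regExt hNT hp hq hpq
          have hpB : Maximal (· ∈ assOf R (regExt N q T) T) p :=
            maximal_assOf_regExt hNT hq hp (Ne.symm hpq)
          have hregAC : IsRegularPrimeExtIn T q (regExt N p T) (regExt (regExt N p T) q T) :=
            isRegularPrimeExtIn_regExt inf_le_right hqA
          have hregBC : IsRegularPrimeExtIn T p (regExt N q T) (regExt (regExt N q T) p T) :=
            isRegularPrimeExtIn_regExt inf_le_right hpB
          obtain ⟨l₃, hl₃⟩ := exists_GPL T (regExt (regExt N p T) q T) inf_le_right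
          have g1 : GPL T (regExt N p T) (q :: l₃) := ⟨_, hregAC, hl₃⟩
          have g2 : GPL T (regExt N q T) (p :: l₃) :=
            ⟨_, hregBC, by rw [regExt_comm (p := q) (q := p)]; exact hl₃⟩
          have m1 : (l₁' : Multiset (Ideal R)) = ((q :: l₃ : List (Ideal R)) : Multiset (Ideal R)) :=
            ih l₁' hlen' (regExt N p T) (q :: l₃) inf_le_right (e1 ▸ h1') g1
          have hlen3 : (p :: l₃).length ≤ n := by
            have := congrArg Multiset.card m1
            simp only [Multiset.coe_card, List.length_cons] at this
            simp only [List.length_cons]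
            omega
          have m2 : ((p :: l₃ : List (Ideal R)) : Multiset (Ideal R)) = (l₂' : Multiset (Ideal R)) :=
            ih (p :: l₃) hlen3 (regExt N q T) l₂' inf_le_right g2 (e2 ▸ h2')
          calc ((p :: l₁' : List (Ideal R)) : Multiset (Ideal R))
              = p ::ₘ (l₁' : Multiset (Ideal R)) := (Multiset.cons_coe p l₁').symm
            _ = p ::ₘ q ::ₘ (l₃ : Multiset (Ideal R)) := by rw [m1, ← Multiset.cons_coe]
            _ = q ::ₘ p ::ₘ (l₃ : Multiset (Ideal R)) := Multiset.cons_swap p q _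
            _ = q ::ₘ (l₂' : Multiset (Ideal R)) := by rw [← m2, ← Multiset.cons_coe]
            _ = ((q :: l₂' : List (Ideal R)) : Multiset (Ideal R)) := Multiset.cons_coe q l₂'


lemma GPL_unique' [IsNoetherianRing R] [Module.Finite R M] {T N : Submodule R M}
    {l₁ l₂ : List (Ideal R)} (hNT : N ≤ T) (h1 : GPL T N l₁) (h2 : GPL T N l₂) :
    (l₁ : Multiset (Ideal R)) = (l₂ : Multiset (Ideal R)) :=
  GPL_unique_aux l₁.length l₁ le_rfl N l₂ hNT h1 h2

lemma GPL_of_filtration {T : Submodule R M} :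
    ∀ {n : ℕ} (F : Fin (n + 1) → Submodule R M) (p : Fin n → Ideal R),
      F (Fin.last n) = T → IsRPEFiltrationIn T F p → GPL T (F 0) (List.ofFn p) := by
  intro n
  induction n with
  | zero =>
    intro F p hlast _
    rw [List.ofFn_zero]
    exact hlast
  | succ n ih =>
    intro F p hlast hF
    rw [List.ofFn_succ]
    refine ⟨F 1, by simpa using hF 0, ?_⟩
    have := ih (F ∘ Fin.succ) (fun i => p i.succ) (by
        show F (Fin.last n).succ = T
        rw [Fin.succ_last]; exact hlast) (fun i => by
        have := hF i.succ
        show IsRegularPrimeExtIn T (p i.succ) (F i.castSucc.succ) (F i.succ.succ)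
        rwa [Fin.succ_castSucc])
    simpa using this

lemma isRegularPrimeExtIn_of_le [IsNoetherianRing R] {N K' K : Submodule R M} {q : Ideal R}
    (h : IsRegularPrimeExtIn ⊤ q N K') (hK : K' ≤ K) : IsRegularPrimeExtIn K q N K' := by
  have hreg := h.2
  obtain ⟨x, -, hw⟩ := assOf_witness hreg.1
  have hxK' : x ∈ K' := by
    rw [eq_regExt_of_isRegularPrimeExtIn h]
    exact ⟨fun a ha => (hw a).mpr ha, trivial⟩
  refine ⟨⟨hK, h.1.2.1, fun L hLK hL => h.1.2.2 L le_top hL⟩, ?_, ?_⟩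
  · exact mem_assOf_of_witness hreg.1.1 (hK hxK') hw
  · intro q' hq' hqq'
    exact hreg.2 (assOf_mono le_top hq') hqq'


/-- If a submodule `K` occurs in some RPE filtration of `M` over `N`, then
`P_M(N) = P_M(K) · P_K(N)`: whenever `I`, `J`, `L` are the products of the primes in
RPE filtrations of `M` over `N`, of `M` over `K`, and of `K` over `N` respectively,
one has `I = J * L`. -/
theorem gpif_mul_of_mem_rpe_filtration {R : Type*} [CommRing R] [IsNoetherianRing R]
    {M : Type*} [AddCommGroup M] [Module R M] [Module.Finite R M]
    (N K : Submodule R M) (hN : N ≠ ⊤)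
    {n : ℕ} (F : Fin (n + 1) → Submodule R M) (p : Fin n → Ideal R)
    (h0 : F 0 = N) (hlast : F (Fin.last n) = ⊤) (hF : IsRPEFiltrationIn ⊤ F p)
    (hK : ∃ r : Fin (n + 1), F r = K)
    (I J L : Multiset (Ideal R))
    (hI : HasGPIF N ⊤ I) (hJ : HasGPIF K ⊤ J) (hL : HasGPIF N K L) :
    I.prod = J.prod * L.prod := by
  obtain ⟨⟨a, ha⟩, hr⟩ := hK
  have hab : n = a + (n - a) := by omega
  set b := n - a with hb
  clear_value b
  subst hab
  -- monotonicity of F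
  have hsm : StrictMono F := Fin.strictMono_iff_lt_succ.mpr (fun i => (hF i).1.2.1.1)
  have hmono : Monotone F := hsm.monotone
  -- head filtration
  set Fh : Fin (a + 1) → Submodule R M := fun i => F ⟨i.1, by omega⟩ with hFh_def
  set ph : Fin a → Ideal R := fun i => p (Fin.castAdd b i) with hph_def
  have hFh0 : Fh 0 = N := by rw [← h0]; congr 1
  have hFhlast : Fh (Fin.last a) = K := by rw [← hr]; exact congrArg F (by ext; simp)
  have hFh : IsRPEFiltrationIn ⊤ Fh ph := fun i => hF ⟨i.1, by omega⟩
  have hFhK : IsRPEFiltrationIn K Fh ph := by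
    intro i
    refine isRegularPrimeExtIn_of_le (hFh i) ?_
    rw [← hr]
    exact hmono (show (⟨i.1 + 1, by omega⟩ : Fin (a + b + 1)) ≤ ⟨a, ha⟩ by
      simp [Fin.le_def])
  have gH : GPL K N (List.ofFn ph) := by
    rw [← hFh0]
    exact GPL_of_filtration Fh ph hFhlast hFhK
  -- tail filtration
  set Ft : Fin (b + 1) → Submodule R M := fun i => F ⟨a + i.1, by omega⟩ with hFt_def
  set pt : Fin b → Ideal R := fun i => p (Fin.natAdd a i) with hpt_def
  have hFt0 : Ft 0 = K := by rw [← hr]; exact congrArg F (by ext; simp)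
  have hFtlast : Ft (Fin.last b) = ⊤ := by rw [← hlast]; congr 1
  have hFt : IsRPEFiltrationIn ⊤ Ft pt := fun i => hF ⟨a + i.1, by omega⟩
  have gT : GPL ⊤ K (List.ofFn pt) := by
    rw [← hFt0]
    exact GPL_of_filtration Ft pt hFtlast hFt
  -- full filtration
  have gFull : GPL ⊤ N (List.ofFn p) := by
    rw [← h0]
    exact GPL_of_filtration F p hlast hF
  -- convert the hypotheses
  obtain ⟨nI, FI, pI, h0I, hlastI, hFI, hsI⟩ := hI
  obtain ⟨nJ, FJ, pJ, h0J, hlastJ, hFJ, hsJ⟩ := hJ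
  obtain ⟨nL, FL, pL, h0L, hlastL, hFL, hsL⟩ := hL
  have gI : GPL ⊤ N (List.ofFn pI) := by
    rw [← h0I]; exact GPL_of_filtration FI pI hlastI hFI
  have gJ : GPL ⊤ K (List.ofFn pJ) := by
    rw [← h0J]; exact GPL_of_filtration FJ pJ hlastJ hFJ
  have gL : GPL K N (List.ofFn pL) := by
    rw [← h0L]; exact GPL_of_filtration FL pL hlastL hFL
  have hNK : N ≤ K := by
    rw [← h0, ← hr]
    exact hmono (by simp [Fin.le_def])
  have eI : I = (List.ofFn p : Multiset (Ideal R)) := by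
    rw [← hsI]; exact GPL_unique' le_top gI gFull
  have eJ : J = (List.ofFn pt : Multiset (Ideal R)) := by
    rw [← hsJ]; exact GPL_unique' le_top gJ gT
  have eL : L = (List.ofFn ph : Multiset (Ideal R)) := by
    rw [← hsL]; exact GPL_unique' hNK gL gH
  have hsplit : (List.ofFn p : Multiset (Ideal R))
      = (List.ofFn ph : Multiset (Ideal R)) + (List.ofFn pt : Multiset (Ideal R)) := by
    rw [List.ofFn_add (f := p)]
    simp [hph_def, hpt_def]
    exact List.Perm.refl _
  rw [eI, eJ, eL, hsplit, Multiset.prod_add, mul_comm]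
end

section
/- Let R be a commutative Noetherian ring, p a prime ideal, and r a positive integer. Then P_R(p^r) = p^r (i.e., R has an RPE filtration over the ideal p^r whose associated product of primes is p^r) if and only if p^r ≠ p^{r-1} and Ass_R(R/p^r) = {p}. -/
variable {R : Type*} [CommRing R] {M : Type*} [AddCommGroup M] [Module R M]

/-- Iterated colon: `citer q P k = (q : P^k)`. -/
def citer (q P : Ideal R) : ℕ → Ideal R
  | 0 => q
  | k + 1 => colonSubmodule (citer q P k) P

@[simp] lemma citer_zero (q P : Ideal R) : citer q P 0 = q := rfl

@[simp] lemma citer_succ (q P : Ideal R) (k : ℕ) :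
    citer q P (k + 1) = colonSubmodule (citer q P k) P := rfl

lemma mem_citer (q P : Ideal R) : ∀ (k : ℕ) (x : R),
    x ∈ citer q P k ↔ ∀ y ∈ P ^ k, y * x ∈ q := by
  intro k
  induction k with
  | zero =>
    intro x
    constructor
    · intro hx y _
      exact Ideal.mul_mem_left _ _ hx
    · intro h
      simpa using h 1 (by simp [Ideal.one_eq_top])
  | succ k ih =>
    intro x
    rw [citer_succ, mem_colonSubmodule]
    constructor
    · intro h z hz
      have hx' : ∀ y ∈ P ^ k, ∀ a ∈ P, (y * a) * x ∈ q := by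
        intro y hy a ha
        have h1 : y * (a • x) ∈ q := (ih (a • x)).mp (h a ha) y hy
        rwa [smul_eq_mul, ← mul_assoc] at h1
      have hle : P ^ (k + 1) ≤ Submodule.colon q (Ideal.span {x}) := by
        rw [pow_succ, Ideal.mul_le]
        intro y hy a ha
        rw [Submodule.mem_colon]
        intro w hw
        obtain ⟨c, rfl⟩ := Submodule.mem_span_singleton.mp hw
        rw [smul_comm]
        exact q.smul_mem c (by simpa [smul_eq_mul] using hx' y hy a ha)
      have := Submodule.mem_colon.mp (hle hz) x (Submodule.mem_span_singleton_self x)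
      rwa [smul_eq_mul] at this
    · intro h a ha
      rw [ih]
      intro y hy
      have hz : y * a ∈ P ^ (k + 1) := by
        rw [pow_succ]
        exact Ideal.mul_mem_mul hy ha
      have := h (y * a) hz
      rwa [smul_eq_mul, ← mul_assoc]

lemma assOf_top (N : Submodule R M) :
    assOf R N (⊤ : Submodule R M) = associatedPrimes R (M ⧸ N) := by
  unfold assOf
  rw [Submodule.map_top, Submodule.range_mkQ]
  exact LinearEquiv.AssociatedPrimes.eq (Submodule.topEquiv)

lemma isAssociatedPrime_quotient_iff [IsNoetherianRing R] {I q : Ideal R} :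
    IsAssociatedPrime q (R ⧸ I) ↔
      q.IsPrime ∧ ∃ x : R, x ∉ I ∧ ∀ a : R, a ∈ q ↔ a * x ∈ I := by
  constructor
  · intro h
    obtain ⟨hq, x, hx⟩ := isAssociatedPrime_iff.mp h
    obtain ⟨x, rfl⟩ := Submodule.Quotient.mk_surjective I x
    have key : ∀ a : R, a ∈ q ↔ a * x ∈ I := by
      intro a
      rw [hx, Submodule.mem_colon_singleton, Submodule.mem_bot, ← Submodule.Quotient.mk_smul,
        Submodule.Quotient.mk_eq_zero, smul_eq_mul]
    refine ⟨hq, x, fun hxI => hq.ne_top (Ideal.eq_top_iff_one _ |>.mpr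
      ((key 1).mpr (by simpa using hxI))), key⟩
  · rintro ⟨hq, x, hxI, hx⟩
    refine isAssociatedPrime_iff.mpr ⟨hq, Submodule.Quotient.mk x, ?_⟩
    ext a
    rw [Submodule.mem_colon_singleton, Submodule.mem_bot, ← Submodule.Quotient.mk_smul,
      Submodule.Quotient.mk_eq_zero, smul_eq_mul]
    exact hx a

/-- `P_R(p^r) = p^r` (i.e. `R` has an RPE filtration over `p^r` whose multiset of primes
is `r` copies of `p`) iff `p^r ≠ p^(r-1)` and `Ass (R/p^r) = {p}`. -/
theorem gpif_pow_iff {R : Type*} [CommRing R] [IsNoetherianRing R]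
    (p : Ideal R) (hp : p.IsPrime) (r : ℕ) (hr : 0 < r) :
    HasGPIF (p ^ r : Ideal R) (⊤ : Submodule R R) (Multiset.replicate r p) ↔
      p ^ r ≠ p ^ (r - 1) ∧ associatedPrimes R (R ⧸ (p ^ r : Ideal R)) = {p} := by
  constructor
  · -- Forward direction
    rintro ⟨n, F, pr, hF0, hFl, hfil, hofn⟩
    have hcard : n = r := by
      have := congrArg Multiset.card hofn
      simpa using this
    subst hcard
    have hpr : ∀ i, pr i = p := by
      intro i
      have hmem : pr i ∈ (List.ofFn pr : Multiset (Ideal R)) := by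
        simp [List.mem_ofFn]
      rw [hofn] at hmem
      exact Multiset.eq_of_mem_replicate hmem
    have hfil' : ∀ i : Fin n, IsRegularPrimeExtIn ⊤ p (F i.castSucc) (F i.succ) := by
      intro i
      have := hfil i
      rwa [hpr i] at this
    have hlt : ∀ i : Fin n, F i.castSucc < F i.succ := fun i => (hfil' i).1.2.1.1
    have hsm : StrictMono F := Fin.strictMono_iff_lt_succ.mpr hlt
    -- Step A: each F j is "p-primary-like"
    have hA : ∀ (j : Fin (n + 1)) (a y : R), a * y ∈ F j → a ∉ p → y ∈ F j := by
      intro j a y hay ha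
      have hex : ∃ k : ℕ, ∃ h : k < n + 1, y ∈ F ⟨k, h⟩ := by
        refine ⟨n, Nat.lt_succ_self n, ?_⟩
        have : (⟨n, Nat.lt_succ_self n⟩ : Fin (n + 1)) = Fin.last n := rfl
        rw [this, hFl]
        trivial
      classical
      obtain ⟨hk, hyk⟩ := Nat.find_spec hex
      set k := Nat.find hex with hkdef
      by_cases hkj : (⟨k, hk⟩ : Fin (n + 1)) ≤ j
      · exact hsm.monotone hkj hyk
      · exfalso
        push_neg at hkj
        have hk0 : k ≠ 0 := by
          intro h0
          apply absurd hkj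
          simp only [not_lt]
          exact le_of_eq_of_le (by ext; simp [h0]) (Fin.zero_le j)
        set m : Fin n := ⟨k - 1, by omega⟩ with hmdef
        have hms : m.succ = (⟨k, hk⟩ : Fin (n + 1)) := by
          ext; simp [hmdef, Fin.val_succ]; omega
        have hymc : y ∉ F m.castSucc := by
          intro hy
          exact Nat.find_min hex (m := k - 1) (by omega) ⟨by omega, hy⟩
        have hjm : j ≤ m.castSucc := by
          have hjk : j.val < k := hkj
          rw [Fin.le_def]
          simp only [Fin.coe_castSucc, hmdef]
          omega
        have hay' : a • y ∈ F m.castSucc := by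
          rw [smul_eq_mul]
          exact hsm.monotone hjm hay
        have hyms : y ∈ F m.succ := by rw [hms]; exact hyk
        rcases (hfil' m).1.2.1.2.2 a y hyms hay' with h | h
        · exact hymc h
        · exact ha h
    -- Step B: each step is the colon by p
    have hB : ∀ m : Fin n, F m.succ = colonSubmodule (F m.castSucc) p := by
      intro m
      have hcolon : (F m.castSucc).colon (F m.succ) = p := (hfil' m).1.2.1.2.1
      have hsub : F m.succ ≤ colonSubmodule (F m.castSucc) p := by
        intro x hx
        rw [mem_colonSubmodule]
        intro a ha
        have ha' : a ∈ (F m.castSucc).colon (F m.succ) := hcolon ▸ ha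
        exact Submodule.mem_colon.mp ha' x hx
      have hext : IsPrimeExt p (F m.castSucc) (colonSubmodule (F m.castSucc) p) := by
        refine ⟨lt_of_lt_of_le (hlt m) hsub, le_antisymm ?_ ?_, ?_⟩
        · intro a ha
          rw [← hcolon]
          exact Submodule.mem_colon.mpr fun x hx => Submodule.mem_colon.mp ha x (hsub hx)
        · intro a ha
          exact Submodule.mem_colon.mpr fun x hx => (mem_colonSubmodule.mp hx) a ha
        · intro a x _ hax
          by_cases hap : a ∈ p
          · exact Or.inr hap
          · exact Or.inl (hA m.castSucc a x (by rwa [smul_eq_mul] at hax) hap)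
      have hnlt := (hfil' m).1.2.2 _ le_top hext
      exact ((lt_or_eq_of_le hsub).resolve_left hnlt)
    -- Step C: the filtration is given by iterated colons
    have hC : ∀ (k : ℕ) (hk : k < n + 1), F ⟨k, hk⟩ = citer (p ^ n) p k := by
      intro k
      induction k with
      | zero =>
        intro hk
        have : (⟨0, hk⟩ : Fin (n + 1)) = 0 := by ext; simp
        rw [this, hF0, citer_zero]
      | succ k ih =>
        intro hk
        have hkr : k < n := by omega
        have h1 : (⟨k + 1, hk⟩ : Fin (n + 1)) = (⟨k, hkr⟩ : Fin n).succ := rfl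
        have h2 : (⟨k, hkr⟩ : Fin n).castSucc = (⟨k, by omega⟩ : Fin (n + 1)) := rfl
        rw [h1, hB, h2, ih (by omega), citer_succ]
    constructor
    · -- p ^ n ≠ p ^ (n - 1)
      intro heq
      have hlast : F ⟨n - 1, by omega⟩ ≠ ⊤ := by
        have hstep := hlt ⟨n - 1, by omega⟩
        have hcs : (⟨n - 1, by omega⟩ : Fin n).castSucc = (⟨n - 1, by omega⟩ : Fin (n + 1)) := rfl
        rw [hcs] at hstep
        exact ne_top_of_lt (lt_of_lt_of_le hstep le_top)
      apply hlast
      rw [hC (n - 1) (by omega)]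
      rw [Submodule.eq_top_iff']
      intro x
      rw [mem_citer]
      intro y hy
      rw [← heq] at hy
      exact Ideal.mul_mem_right x _ hy
    · -- Ass(R / p^n) = {p}
      have hto : assOf R (p ^ n : Ideal R) (⊤ : Submodule R R)
          = associatedPrimes R (R ⧸ (p ^ n : Ideal R)) := assOf_top _
      have hpmem : p ∈ associatedPrimes R (R ⧸ (p ^ n : Ideal R)) := by
        have h0 := (hfil' ⟨0, hr⟩).2.1
        have hcs : (⟨0, hr⟩ : Fin n).castSucc = (0 : Fin (n + 1)) := by ext; simp
        rw [hcs, hF0, hto] at h0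
        exact h0
      ext q
      simp only [Set.mem_singleton_iff]
      constructor
      · intro hq
        obtain ⟨hqp, x, hxI, hx⟩ := isAssociatedPrime_quotient_iff.mp hq
        apply le_antisymm
        · intro a ha
          by_contra hap
          apply hxI
          have hax : a * x ∈ F 0 := by rw [hF0]; exact (hx a).mp ha
          have := hA 0 a x hax hap
          rwa [hF0] at this
        · intro a hap
          refine hqp.mem_of_pow_mem n ?_
          exact (hx (a ^ n)).mpr (Ideal.mul_mem_right x _ (Ideal.pow_mem_pow hap n))
      · rintro rfl
        exact hpmem
  · -- Backward direction
    rintro ⟨hne, hass⟩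
    classical
    set C : ℕ → Ideal R := citer (p ^ r) p with hCdef
    have hpow : ∀ i, i < r → (1 : R) ∉ C i := by
      intro i hir h1
      apply hne
      have hsub : p ^ i ≤ p ^ r := by
        intro y hy
        have := (mem_citer (p ^ r) p i 1).mp h1 y hy
        rwa [mul_one] at this
      have hstep : p ^ i = p ^ (i + 1) :=
        le_antisymm (le_trans hsub (Ideal.pow_le_pow_right (by omega)))
          (Ideal.pow_le_pow_right (by omega))
      calc p ^ r = p ^ (i + 1) * p ^ (r - 1 - i) := by rw [← pow_add]; congr 1; omega
        _ = p ^ i * p ^ (r - 1 - i) := by rw [← hstep]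
        _ = p ^ (r - 1) := by rw [← pow_add]; congr 1; omega
    have hZ : ∀ a z : R, a * z ∈ p ^ r → z ∉ p ^ r → a ∈ p := by
      intro a z haz hz
      have hz0 : (Submodule.Quotient.mk z : R ⧸ (p ^ r : Ideal R)) ≠ 0 := by
        rwa [Ne, Submodule.Quotient.mk_eq_zero]
      obtain ⟨P, hP, hle⟩ := exists_le_isAssociatedPrime_of_isNoetherianRing R _ hz0
      have hPp : P = p := by
        have : P ∈ associatedPrimes R (R ⧸ (p ^ r : Ideal R)) := hP
        rwa [hass, Set.mem_singleton_iff] at this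
      rw [← hPp]
      apply hle
      rw [Submodule.mem_colon_singleton, Submodule.mem_bot, ← Submodule.Quotient.mk_smul,
        Submodule.Quotient.mk_eq_zero, smul_eq_mul]
      exact haz
    have hprim : ∀ (i : ℕ) (a x : R), a * x ∈ C i → x ∉ C i → a ∈ p := by
      intro i a x hax hx
      rw [hCdef, mem_citer] at hax hx
      push_neg at hx
      obtain ⟨y, hy, hyx⟩ := hx
      refine hZ a (y * x) ?_ hyx
      have h2 := hax y hy
      have h3 : a * (y * x) = y * (a * x) := by ring
      rw [h3]
      exact h2
    have hassi : ∀ i, i < r → associatedPrimes R (R ⧸ (C i : Ideal R)) = {p} := by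
      intro i hir
      have hsub : associatedPrimes R (R ⧸ (C i : Ideal R)) ⊆ {p} := by
        intro q hq
        obtain ⟨hqp, x, hxI, hx⟩ := isAssociatedPrime_quotient_iff.mp hq
        simp only [Set.mem_singleton_iff]
        apply le_antisymm
        · intro a ha
          exact hprim i a x ((hx a).mp ha) hxI
        · intro a hap
          refine hqp.mem_of_pow_mem r ?_
          apply (hx (a ^ r)).mpr
          rw [hCdef, mem_citer]
          intro z hz
          exact Ideal.mul_mem_left _ _ (Ideal.mul_mem_right x _ (Ideal.pow_mem_pow hap r))
        
      have hnt : Nontrivial (R ⧸ (C i : Ideal R)) := by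
        refine Submodule.Quotient.nontrivial_iff.mpr ?_
        intro h
        exact hpow i hir (h ▸ Submodule.mem_top)
      obtain ⟨q0, hq0⟩ := associatedPrimes.nonempty R (R ⧸ (C i : Ideal R))
      apply Set.Subset.antisymm hsub
      intro q hqq
      rw [Set.mem_singleton_iff] at hqq
      subst hqq
      have := hsub hq0
      rw [Set.mem_singleton_iff] at this
      rwa [← this]
    have hwit : ∀ i, i < r → ∃ x : R, x ∉ C i ∧ ∀ a : R, a ∈ p ↔ a * x ∈ C i := by
      intro i hir
      have hpm : p ∈ associatedPrimes R (R ⧸ (C i : Ideal R)) := by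
        rw [hassi i hir]; rfl
      obtain ⟨_, x, hx1, hx2⟩ := isAssociatedPrime_quotient_iff.mp hpm
      exact ⟨x, hx1, hx2⟩
    refine ⟨r, fun i => C i.val, fun _ => p, ?_, ?_, ?_, ?_⟩
    · simp [hCdef]
    · show C r = ⊤
      rw [Submodule.eq_top_iff']
      intro x
      rw [hCdef, mem_citer]
      intro y hy
      exact Ideal.mul_mem_right x _ hy
    · intro i
      have hk : i.val < r := i.isLt
      have hcs : (i.castSucc : Fin (r + 1)).val = i.val := rfl
      have hss : (i.succ : Fin (r + 1)).val = i.val + 1 := rfl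
      simp only [hcs, hss]
      set k := i.val with hkd
      obtain ⟨x, hx1, hx2⟩ := hwit k hk
      have hle : C k ≤ C (k + 1) := by
        intro z hz
        rw [hCdef, citer_succ, mem_colonSubmodule]
        intro a ha
        rw [smul_eq_mul]
        exact Ideal.mul_mem_left _ _ hz
      have hxk1 : x ∈ C (k + 1) := by
        rw [hCdef, citer_succ, mem_colonSubmodule]
        intro a ha
        rw [smul_eq_mul]
        exact (hx2 a).mp ha
      have hstrict : C k < C (k + 1) := by
        refine lt_of_le_of_ne hle fun h => hx1 ?_
        rw [h]
        exact hxk1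
      have hcolon : (C k : Submodule R R).colon (C (k + 1)) = p := by
        apply le_antisymm
        · intro a ha
          have := Submodule.mem_colon.mp ha x hxk1
          rw [smul_eq_mul] at this
          exact (hx2 a).mpr this
        · intro a hap
          refine Submodule.mem_colon.mpr fun z hz => ?_
          rw [hCdef, citer_succ, SetLike.mem_coe, mem_colonSubmodule] at hz
          exact hz a hap
      refine ⟨⟨le_top, ⟨hstrict, hcolon, ?_⟩, ?_⟩, ?_⟩
      · intro a z hz haz
        by_cases hap : a ∈ p
        · exact Or.inr hap
        · refine Or.inl ?_
          by_contra hzk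
          exact hap (hprim k a z (by rwa [smul_eq_mul] at haz) hzk)
      · intro L _ hLext hlt'
        have hLle : L ≤ C (k + 1) := by
          intro z hz
          rw [hCdef, citer_succ, mem_colonSubmodule]
          intro a hap
          have ha' : a ∈ (C k : Submodule R R).colon L := hLext.2.1 ▸ hap
          exact Submodule.mem_colon.mp ha' z hz
        exact hlt'.not_ge hLle
      · have h' : assOf R (C k : Submodule R R) ⊤ = {p} := by
          rw [assOf_top]
          exact hassi k hk
        constructor
        · rw [h']; rfl
        · intro q hq _
          rw [h', Set.mem_singleton_iff] at hq
          exact le_of_eq hq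
    · simp [List.ofFn_const, Multiset.coe_replicate]
end

section
/- Let R be a commutative Noetherian ring, p₁, …, pₙ distinct prime ideals, r₁, …, rₙ positive integers. If there exist a finitely generated R-module M and a proper submodule N with generalized prime ideal factorization P_M(N) = p₁^{r₁}⋯pₙ^{rₙ}, then p_i^{r_i} ≠ p_i^{r_i − 1} for every 1 ≤ i ≤ n. -/
variable {R : Type*} [CommRing R] {M : Type*} [AddCommGroup M] [Module R M]

/-- If `p₁^{r₁} ⋯ pₙ^{rₙ}` is the generalized prime ideal factorization of some proper
submodule `N` of a finitely generated module `M`, then `pᵢ^{rᵢ} ≠ pᵢ^{rᵢ−1}` for all `i`. -/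
theorem pow_ne_pow_pred_of_gpif_prod {R : Type*} [CommRing R] [IsNoetherianRing R]
    {M : Type*} [AddCommGroup M] [Module R M] [Module.Finite R M]
    {n : ℕ} (p : Fin n → Ideal R) (hprime : ∀ i, (p i).IsPrime)
    (hdist : Function.Injective p) (r : Fin n → ℕ) (hr : ∀ i, 0 < r i)
    (N : Submodule R M) (hN : N ≠ ⊤)
    (h : HasGPIF N ⊤ (∑ i, Multiset.replicate (r i) (p i))) :
    ∀ i, p i ^ r i ≠ p i ^ (r i - 1) := by
  classical
  intro i₀ hcontra
  obtain ⟨n', F, q, hF0, hFlast, hfilt, hq⟩ := h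
  set P : Ideal R := p i₀ with hP
  have hPprime : P.IsPrime := hprime i₀
  set m : ℕ := r i₀ - 1 with hmdef
  have hm1 : m + 1 = r i₀ := Nat.succ_pred_eq_of_pos (hr i₀)
  -- basic facts about the filtration steps
  have hlt : ∀ j : Fin n', F j.castSucc < F j.succ := fun j => (hfilt j).1.2.1.1
  have hcolon : ∀ j : Fin n', (F j.castSucc).colon (F j.succ) = q j := fun j => (hfilt j).1.2.1.2.1
  have htf : ∀ j : Fin n', ∀ a : R, ∀ x ∈ F j.succ, a • x ∈ F j.castSucc →
      x ∈ F j.castSucc ∨ a ∈ q j := fun j => (hfilt j).1.2.1.2.2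
  have hmaxl : ∀ j : Fin n', ∀ L ≤ (⊤ : Submodule R M),
      IsPrimeExt (q j) (F j.castSucc) L → ¬ F j.succ < L := fun j => (hfilt j).1.2.2
  have hmonoF : Monotone F := (Fin.strictMono_iff_lt_succ.mpr hlt).monotone
  have hsmul : ∀ j : Fin n', ∀ s ∈ q j, ∀ x ∈ F j.succ, s • x ∈ F j.castSucc := by
    intro j s hs x hx
    exact Submodule.mem_colon.mp ((hcolon j).symm ▸ hs) x hx
  -- every filtration prime is one of the `p i`
  have hqp : ∀ j : Fin n', ∃ i', q j = p i' := by
    intro j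
    have hmem : q j ∈ (List.ofFn q : Multiset (Ideal R)) := by
      simp [List.mem_ofFn]
    rw [hq] at hmem
    obtain ⟨i', -, hmem⟩ := Multiset.mem_sum.mp hmem
    exact ⟨i', Multiset.eq_of_mem_replicate hmem⟩
  -- Nakayama
  have hpow : (P ^ (m + 1) : Ideal R) = P ^ m := by
    rw [hm1]; exact hcontra
  obtain ⟨t, ht1, ht2⟩ :=
    Submodule.exists_sub_one_mem_and_smul_eq_zero_of_fg_of_le_smul P (P ^ m : Ideal R)
      (IsNoetherian.noetherian _)
      (by rw [Ideal.smul_eq_mul, ← pow_succ']; exact hpow.ge)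
  set e : R := 1 - t with he
  have heP : e ∈ P := by
    have := P.neg_mem ht1
    simpa [he, neg_sub] using this
  have he2 : ∀ c ∈ (P ^ m : Ideal R), e * c = c := by
    intro c hc
    have h0 : t • c = 0 := ht2 c hc
    rw [smul_eq_mul] at h0
    rw [he, sub_mul, one_mul, h0, sub_zero]
  -- for a prime ≠ P among the filtration primes, pick an element outside P
  have hsep : ∀ j : Fin n', q j ≠ P → ∃ s, s ∈ q j ∧ s ∉ P := by
    intro j hne
    by_contra hno
    push_neg at hno
    have hle : q j ≤ P := fun s hs => hno s hs
    obtain ⟨i', hi'⟩ := hqp j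
    have hjprime : (q j).IsPrime := hi' ▸ hprime i'
    have hPm : (P ^ m : Ideal R) ≤ q j := by
      intro c hc
      have h0 : (1 - e) * c = 0 := by rw [sub_mul, one_mul, he2 c hc, sub_self]
      rcases hjprime.mem_or_mem (show (1 - e) * c ∈ q j from h0 ▸ (q j).zero_mem) with h1 | h1
      · exfalso
        have hone : (1 : R) ∈ P := by
          have := P.add_mem (hle h1) heP
          simpa using this
        exact hPprime.ne_top ((Ideal.eq_top_iff_one _).mpr hone)
      · exact h1
    rcases Nat.eq_zero_or_pos m with hm0 | hmpos
    · have hone : (1 : R) ∈ q j := hPm (by simp [hm0])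
      exact hjprime.ne_top ((Ideal.eq_top_iff_one _).mpr hone)
    · have hPle : P ≤ q j := fun a ha =>
        hjprime.mem_of_pow_mem m (hPm (Ideal.pow_mem_pow ha m))
      exact hne (le_antisymm hle hPle)
  -- descent through non-P steps
  have desc : ∀ (kb ka : ℕ) (hkb : kb < n' + 1) (hka : ka ≤ kb),
      (∀ j : Fin n', ka ≤ (j : ℕ) → (j : ℕ) < kb → q j ≠ P) →
      ∃ S : R, S ∉ P ∧ ∀ x ∈ F ⟨kb, hkb⟩, S • x ∈ F ⟨ka, lt_of_le_of_lt hka hkb⟩ := by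
    intro kb
    induction kb with
    | zero =>
      intro ka hkb hka _
      have hka0 : ka = 0 := Nat.le_zero.mp hka
      subst hka0
      exact ⟨1, fun h1 => hPprime.ne_top ((Ideal.eq_top_iff_one _).mpr h1),
        fun x hx => by simpa using hx⟩
    | succ kb ih =>
      intro ka hkb hka hno
      rcases Nat.lt_or_ge ka (kb + 1) with hlt' | hge
      · have hkb' : kb < n' := by omega
        have hjne : q ⟨kb, hkb'⟩ ≠ P := hno ⟨kb, hkb'⟩ (by simpa using Nat.lt_succ_iff.mp hlt') (by simp)
        obtain ⟨s, hs1, hs2⟩ := hsep ⟨kb, hkb'⟩ hjne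
        obtain ⟨S', hS1, hS2⟩ := ih ka (by omega) (by omega) (fun j h1 h2 => hno j h1 (by omega))
        refine ⟨S' * s, fun hmem => ?_, fun x hx => ?_⟩
        · rcases hPprime.mem_or_mem hmem with h | h
          exacts [hS1 h, hs2 h]
        · have hx' : x ∈ F (Fin.succ ⟨kb, hkb'⟩) := hx
          have hx1 : s • x ∈ F (Fin.castSucc ⟨kb, hkb'⟩) := hsmul _ s hs1 x hx'
          rw [mul_smul]
          exact hS2 (s • x) hx1
      · have : ka = kb + 1 := le_antisymm hka hge
        subst this
        exact ⟨1, fun h1 => hPprime.ne_top ((Ideal.eq_top_iff_one _).mpr h1),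
          fun x hx => by simpa using hx⟩
  -- main descent
  have Aux : ∀ (K : ℕ) (k : Fin n'), (k : ℕ) < K → q k = P → ∀ (u : M) (d : R) (w : M),
      u ∈ F k.succ → u ∉ F k.castSucc → u = d • w →
      d ∈ (P ^ (m - (Finset.univ.filter (fun j : Fin n' => j < k ∧ q j = P)).card) : Ideal R) →
      False := by
    intro K
    induction K with
    | zero => intro k hk; omega
    | succ K ih =>
      intro k hkK hkP u d w hu1 hu2 hudw hd
      have hann_u : ∀ a : R, a • u ∈ F k.castSucc → a ∈ P := by
        intro a ha
        rcases htf k a u hu1 ha with h1 | h1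
        · exact absurd h1 hu2
        · rwa [hkP] at h1
      rcases Finset.eq_empty_or_nonempty
          (Finset.univ.filter (fun j : Fin n' => j < k ∧ q j = P)) with hemp | hne
      · -- bottom occurrence: use the Nakayama element
        rw [hemp, Finset.card_empty, Nat.sub_zero] at hd
        have h1 : e • u ∈ F k.castSucc := hsmul k e (hkP ▸ heP) u hu1
        have h2 : e • u = u := by rw [hudw, smul_smul, he2 d hd]
        exact hu2 (h2 ▸ h1)
      · set Sk := Finset.univ.filter (fun j : Fin n' => j < k ∧ q j = P) with hSk
        set k' := Sk.max' hne with hk'def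
        have hk'mem : k' ∈ Sk := Sk.max'_mem hne
        have hk'mem' := hk'mem
        rw [hSk, Finset.mem_filter] at hk'mem'
        obtain ⟨-, hk'lt, hk'P⟩ := hk'mem'
        have hk'ltn : (k' : ℕ) < (k : ℕ) := hk'lt
        have hbetween : ∀ j : Fin n', (k' : ℕ) < (j : ℕ) → (j : ℕ) < (k : ℕ) → q j ≠ P := by
          intro j h1 h2 hj
          have hjmem : j ∈ Sk := by
            rw [hSk, Finset.mem_filter]
            exact ⟨Finset.mem_univ _, by rwa [Fin.lt_def], hj⟩
          have h3 : (j : ℕ) ≤ (k' : ℕ) := Finset.le_max' Sk j hjmem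
          omega
        have hSkerase : Finset.univ.filter (fun j : Fin n' => j < k' ∧ q j = P) = Sk.erase k' := by
          ext j
          simp only [Finset.mem_filter, Finset.mem_erase, Finset.mem_univ, true_and, hSk]
          constructor
          · rintro ⟨h1, h2⟩
            exact ⟨ne_of_lt h1, lt_trans h1 hk'lt, h2⟩
          · rintro ⟨h1, h2, h3⟩
            refine ⟨?_, h3⟩
            have h4 : j ∈ Sk := by
              rw [hSk, Finset.mem_filter]; exact ⟨Finset.mem_univ _, h2, h3⟩
            exact lt_of_le_of_ne (Finset.le_max' Sk j h4) h1
        have hcard : (Finset.univ.filter (fun j : Fin n' => j < k' ∧ q j = P)).card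
            = Sk.card - 1 := by
          rw [hSkerase, Finset.card_erase_of_mem (Sk.max'_mem hne)]
        have hcardpos : 0 < Sk.card := Finset.card_pos.mpr hne
        obtain ⟨S, hS, hSmap⟩ := desc (k : ℕ) ((k' : ℕ) + 1) (by omega) (by omega)
          (fun j h1 h2 => hbetween j (by omega) h2)
        set v := S • u with hv
        have hann_v : ∀ a : R, a • v ∈ F k.castSucc → a ∈ P := by
          intro a ha
          rw [hv, ← mul_smul] at ha
          rcases hPprime.mem_or_mem (hann_u (a * S) ha) with h1 | h1
          · exact h1
          · exact absurd h1 hS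
        have hva : ∀ a, a ∈ P → a • v ∈ F k'.succ := by
          intro a ha
          have h1 : a • u ∈ F k.castSucc := hsmul k a (hkP ▸ ha) u hu1
          have h2 : S • (a • u) ∈ F ⟨(k' : ℕ) + 1, by omega⟩ := hSmap (a • u) h1
          rw [hv, smul_comm]
          exact h2
        by_cases hA : ∀ a ∈ P, a • v ∈ F k'.castSucc
        · -- contradiction with maximality of the prime extension at step k'
          have hKsub : F k'.succ ≤ F k.castSucc := by
            apply hmonoF
            rw [Fin.le_def]
            simpa using hk'ltn
          have hvnot : v ∉ F k.castSucc := fun hmem =>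
            hPprime.ne_top ((Ideal.eq_top_iff_one _).mpr (hann_v 1 (by simpa using hmem)))
          have hvK' : v ∉ F k'.succ := fun hmem => hvnot (hKsub hmem)
          have hN'k : F k'.castSucc ≤ F k.castSucc := by
            apply hmonoF
            rw [Fin.le_def]
            simp only [Fin.coe_castSucc]
            omega
          set L : Submodule R M := F k'.succ ⊔ Submodule.span R {v} with hL
          have hvL : v ∈ L := Submodule.mem_sup_right (Submodule.mem_span_singleton_self v)
          have hpe : IsPrimeExt (q k') (F k'.castSucc) L := by
            rw [hk'P]
            refine ⟨lt_of_lt_of_le (hlt k') le_sup_left, ?_, ?_⟩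
            · apply le_antisymm
              · intro a ha
                have haK : a ∈ (F k'.castSucc).colon (F k'.succ) :=
                  Submodule.mem_colon.mpr fun x hx => Submodule.mem_colon.mp ha x (Submodule.mem_sup_left hx)
                rw [hcolon k', hk'P] at haK
                exact haK
              · intro a ha
                rw [Submodule.mem_colon]
                intro x hx
                obtain ⟨y, hy, z, hz, rfl⟩ := Submodule.mem_sup.mp hx
                obtain ⟨c, rfl⟩ := Submodule.mem_span_singleton.mp hz
                rw [smul_add]
                refine Submodule.add_mem _ ?_ ?_
                · exact hsmul k' a (hk'P.symm ▸ ha) y hy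
                · rw [smul_comm]
                  exact Submodule.smul_mem _ c (hA a ha)
            · intro a x hx hax
              by_cases haP : a ∈ P
              · exact Or.inr haP
              · left
                obtain ⟨y, hy, z, hz, rfl⟩ := Submodule.mem_sup.mp hx
                obtain ⟨c, rfl⟩ := Submodule.mem_span_singleton.mp hz
                rw [smul_add] at hax
                have hyk : y ∈ F k.castSucc := hKsub hy
                have hacv : a • (c • v) ∈ F k.castSucc := by
                  have h1 : a • y + a • (c • v) ∈ F k.castSucc := hN'k hax
                  have h2 : a • y ∈ F k.castSucc := Submodule.smul_mem _ a hyk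
                  simpa using Submodule.sub_mem _ h1 h2
                have hac : a * c ∈ P := hann_v (a * c) (by rw [mul_smul]; exact hacv)
                have hcP : c ∈ P := (hPprime.mem_or_mem hac).resolve_left haP
                have hcv : c • v ∈ F k'.castSucc := hA c hcP
                have hay : a • y ∈ F k'.castSucc := by
                  have h2 : a • (c • v) ∈ F k'.castSucc := Submodule.smul_mem _ a hcv
                  simpa using Submodule.sub_mem _ hax h2
                rcases htf k' a y hy hay with h1 | h1
                · exact Submodule.add_mem _ h1 hcv
                · exact absurd (hk'P ▸ h1) haP
          have hKL : F k'.succ < L :=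
            SetLike.lt_iff_le_and_exists.mpr ⟨le_sup_left, v, hvL, hvK'⟩
          exact hmaxl k' L le_top hpe hKL
        · push_neg at hA
          obtain ⟨b, hbP, hbv⟩ := hA
          have hd' : b * (S * d) ∈
              (P ^ (m - (Finset.univ.filter (fun j : Fin n' => j < k' ∧ q j = P)).card) :
                Ideal R) := by
            rw [hcard]
            have h1 : S * d ∈ (P ^ (m - Sk.card) : Ideal R) := Ideal.mul_mem_left _ S hd
            have h2 : b * (S * d) ∈ (P * P ^ (m - Sk.card) : Ideal R) := Ideal.mul_mem_mul hbP h1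
            have h3 : (P * P ^ (m - Sk.card) : Ideal R) = P ^ (m - Sk.card + 1) := by
              rw [pow_succ, mul_comm]
            have h4 : (P ^ (m - Sk.card + 1) : Ideal R) ≤ P ^ (m - (Sk.card - 1)) :=
              Ideal.pow_le_pow_right (by omega)
            exact h4 (h3 ▸ h2)
          have heq : b • v = (b * (S * d)) • w := by
            rw [hv, hudw, mul_smul, mul_smul]
          exact ih k' (by omega) hk'P (b • v) (b * (S * d)) w (hva b hbP) hbv heq hd'
  -- count the occurrences of P among the filtration primes
  have hocc : (r i₀ : ℕ) ≤ (Finset.univ.filter (fun j : Fin n' => q j = P)).card := by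
    have h2 : Multiset.replicate (r i₀) P ≤ ∑ i, Multiset.replicate (r i) (p i) :=
      Finset.single_le_sum (f := fun i => Multiset.replicate (r i) (p i))
        (fun i _ => Multiset.zero_le _) (Finset.mem_univ i₀)
    have h3 : r i₀ ≤ Multiset.count P (∑ i, Multiset.replicate (r i) (p i)) := by
      have h4 := Multiset.count_le_of_le P h2
      rwa [Multiset.count_replicate_self] at h4
    rw [← hq, ← Fin.univ_val_map, Multiset.count_map] at h3
    have h5 : (Finset.univ.filter (fun j : Fin n' => q j = P)).card
        = Multiset.card (Multiset.filter (fun j => P = q j) Finset.univ.val) := by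
      rw [Finset.card_def, Finset.filter_val, Multiset.filter_congr (fun x _ => eq_comm)]
    omega
  have hoccne : (Finset.univ.filter (fun j : Fin n' => q j = P)).Nonempty :=
    Finset.card_pos.mp (by have := hr i₀; omega)
  set k₀ := (Finset.univ.filter (fun j : Fin n' => q j = P)).max' hoccne with hk₀def
  have hk₀mem : k₀ ∈ Finset.univ.filter (fun j : Fin n' => q j = P) :=
    Finset.max'_mem _ hoccne
  have hk₀P : q k₀ = P := (Finset.mem_filter.mp hk₀mem).2
  have hsub : (Finset.univ.filter (fun j : Fin n' => q j = P)).erase k₀ ⊆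
      Finset.univ.filter (fun j : Fin n' => j < k₀ ∧ q j = P) := by
    intro j hj
    rw [Finset.mem_erase, Finset.mem_filter] at hj
    obtain ⟨hne', -, hjP⟩ := hj
    rw [Finset.mem_filter]
    refine ⟨Finset.mem_univ _, ?_, hjP⟩
    have h1 : j ∈ Finset.univ.filter (fun j : Fin n' => q j = P) := by
      rw [Finset.mem_filter]; exact ⟨Finset.mem_univ _, hjP⟩
    exact lt_of_le_of_ne (Finset.le_max' _ j h1) hne'
  have hckk₀ : m ≤ (Finset.univ.filter (fun j : Fin n' => j < k₀ ∧ q j = P)).card := by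
    have h1 := Finset.card_le_card hsub
    rw [Finset.card_erase_of_mem hk₀mem] at h1
    omega
  obtain ⟨u, hu1, hu2⟩ := SetLike.exists_of_lt (hlt k₀)
  exact Aux ((k₀ : ℕ) + 1) k₀ (Nat.lt_succ_self _) hk₀P u 1 u hu1 hu2 (one_smul R u).symm
    (by rw [Nat.sub_eq_zero_of_le hckk₀, pow_zero, Ideal.one_eq_top]; exact Submodule.mem_top)
end

section
/- Let R be a commutative Noetherian ring, p₁, …, pₙ distinct primes, r₁, …, rₙ positive integers, and suppose some finitely generated R-module M and proper submodule N satisfy P_M(N) = p₁^{r₁}⋯pₙ^{rₙ}. If p_i is minimal among {p₁, …, pₙ} (with respect to inclusion), then p₁^{r₁}⋯p_i^{r_i − 1}⋯pₙ^{rₙ} ≠ p₁^{r₁}⋯p_i^{r_i}⋯pₙ^{rₙ}. -/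
variable {R : Type*} [CommRing R] {M : Type*} [AddCommGroup M] [Module R M]

/-- Key lemma: if `B` is a regular (maximal) `q`-prime extension of `A` in `⊤`, then any
element `y` with `q • y ⊆ A` already lies in `B`. -/
lemma mem_of_colon_smul [IsNoetherianRing R] {q : Ideal R} {A B : Submodule R M}
    (hreg : IsRegularPrimeExtIn ⊤ q A B) {y : M} (hy : ∀ c ∈ q, c • y ∈ A) : y ∈ B := by
  by_contra hyB
  obtain ⟨⟨hBT, ⟨hAB, hcolon, hprime⟩, hmax⟩, hAss⟩ := hreg
  have hqB : ∀ c ∈ q, ∀ z ∈ B, c • z ∈ A := by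
    intro c hc z hz
    rw [← hcolon] at hc
    exact Submodule.mem_colon.mp hc z hz
  set K := B ⊔ Submodule.span R {y} with hKdef
  have hyK : y ∈ K := Submodule.mem_sup_right (Submodule.mem_span_singleton_self y)
  have hqK : ∀ c ∈ q, ∀ x ∈ K, c • x ∈ A := by
    intro c hc x hx
    obtain ⟨z, hz, w, hw, rfl⟩ := Submodule.mem_sup.mp hx
    obtain ⟨d, rfl⟩ := Submodule.mem_span_singleton.mp hw
    rw [smul_add]
    refine Submodule.add_mem _ (hqB c hc z hz) ?_
    rw [smul_comm]
    exact Submodule.smul_mem _ d (hy c hc)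
  have hprimeK : ∀ a : R, ∀ x ∈ K, a • x ∈ A → x ∈ A ∨ a ∈ q := by
    intro a x hxK hax
    by_cases hxA : x ∈ A
    · exact Or.inl hxA
    by_cases haq : a ∈ q
    · exact Or.inr haq
    exfalso
    have hx0 : A.mkQ x ≠ 0 := by
      simpa [Submodule.mkQ_apply, Submodule.Quotient.mk_eq_zero] using hxA
    obtain ⟨P, hP, hPle⟩ := exists_le_isAssociatedPrime_of_isNoetherianRing R (A.mkQ x) hx0
    have hPass : P ∈ assOf R A ⊤ := by
      have h1 : associatedPrimes R (M ⧸ A) = assOf R A ⊤ := by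
        unfold assOf
        rw [Submodule.map_top, Submodule.range_mkQ]
        exact LinearEquiv.AssociatedPrimes.eq (Submodule.topEquiv (R := R) (M := M ⧸ A)).symm
      exact h1 ▸ hP
    have hannle : ∀ c : R, c • x ∈ A → c ∈ P := by
      intro c hcx
      apply hPle
      have h2 : c • A.mkQ x = A.mkQ (c • x) := (map_smul A.mkQ c x).symm
      rw [Submodule.mem_colon_singleton, Submodule.mem_bot, h2]
      exact (Submodule.Quotient.mk_eq_zero A).mpr hcx
    have hqP : q ≤ P := fun c hc => hannle c (hqK c hc x hxK)
    exact haq (hAss.2 hPass hqP (hannle a hax))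
  have hKext : IsPrimeExt q A K := by
    refine ⟨lt_of_lt_of_le hAB le_sup_left, le_antisymm ?_ ?_, hprimeK⟩
    · rw [← hcolon]
      exact Submodule.colon_mono le_rfl (SetLike.coe_subset_coe.mpr le_sup_left)
    · intro c hc
      exact Submodule.mem_colon.mpr fun x hx => hqK c hc x hx
  exact hmax K le_top hKext (SetLike.lt_iff_le_and_exists.mpr ⟨le_sup_left, y, hyK, hyB⟩)

/-- If `p₁^{r₁} ⋯ pₙ^{rₙ}` is the generalized prime ideal factorization of some proper
submodule and `pᵢ` is minimal among `{p₁, …, pₙ}`, then lowering the exponent of `pᵢ`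
by one changes the product ideal. -/
theorem prod_pow_ne_of_minimal {R : Type*} [CommRing R] [IsNoetherianRing R]
    {M : Type*} [AddCommGroup M] [Module R M] [Module.Finite R M]
    {n : ℕ} (p : Fin n → Ideal R) (hprime : ∀ i, (p i).IsPrime)
    (hdist : Function.Injective p) (r : Fin n → ℕ) (hr : ∀ i, 0 < r i)
    (N : Submodule R M) (hN : N ≠ ⊤)
    (h : HasGPIF N ⊤ (∑ i, Multiset.replicate (r i) (p i)))
    (i : Fin n) (hmin : Minimal (· ∈ Set.range p) (p i)) :
    (∏ j, p j ^ (if j = i then r j - 1 else r j)) ≠ ∏ j, p j ^ r j := by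
  intro heq
  obtain ⟨m, F, q, hF0, hFm, hfil, hq⟩ := h
  classical
  set L : List (Ideal R) := List.ofFn q with hL
  have hlen : L.length = m := by simp [hL]
  -- basic facts about the filtration
  have hsmulstep : ∀ l : Fin m, ∀ c ∈ q l, ∀ x ∈ F l.succ, c • x ∈ F l.castSucc := by
    intro l c hc x hx
    have hcol : (F l.castSucc).colon (F l.succ) = q l := (hfil l).1.2.1.2.1
    rw [← hcol] at hc
    exact Submodule.mem_colon.mp hc x hx
  have hlt : ∀ l : Fin m, F l.castSucc < F l.succ := fun l => (hfil l).1.2.1.1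
  -- descending: the suffix products push everything down the filtration
  have hdesc : ∀ (d l : ℕ) (hl : l + d = m) (y : M),
      ∀ t ∈ ((L.drop l).prod : Ideal R), t • y ∈ F ⟨l, by omega⟩ := by
    intro d
    induction d with
    | zero =>
      intro l hl y t _
      have hlm : l = m := by omega
      subst hlm
      have htop : F ⟨l, by omega⟩ = ⊤ := hFm
      rw [htop]
      trivial
    | succ d ih =>
      intro l hl y t ht
      have hlm : l < m := by omega
      have hdrop : L.drop l = q ⟨l, hlm⟩ :: L.drop (l + 1) := by
        rw [List.drop_eq_getElem_cons (by omega : l < L.length)]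
        congr 1
        simp [hL]
      rw [hdrop, List.prod_cons] at ht
      refine Submodule.mul_induction_on ht ?_ ?_
      · intro a ha b hb
        rw [mul_smul]
        exact hsmulstep ⟨l, hlm⟩ a ha (b • y) (ih (l + 1) (by omega) y b hb)
      · intro t1 t2 h1 h2
        rw [add_smul]
        exact Submodule.add_mem _ h1 h2
  -- the full product
  have hLprod : (L.prod : Ideal R) = ∏ j, p j ^ r j := by
    have hc : ((L : Multiset (Ideal R))).prod = L.prod := Multiset.prod_coe L
    rw [← hc, hq, Multiset.prod_sum]
    simp [Multiset.prod_replicate]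
  -- the recovery claim
  have hrec : ∀ (l : ℕ) (hl : l ≤ m) (y : M) (u : R), u ∉ p i →
      (∀ t ∈ ((L.take l).prod : Ideal R), (u * t) • y ∈ N) → u • y ∈ F ⟨l, by omega⟩ := by
    intro l
    induction l with
    | zero =>
      intro _ y u _ hyp
      have h1 := hyp 1 (by simp)
      rw [mul_one] at h1
      have h0 : F ⟨0, by omega⟩ = N := hF0
      rw [h0]
      exact h1
    | succ l ih =>
      intro hl y u hu hyp
      have hlm : l < m := by omega
      have hgetl : L[l]'(by omega) = q ⟨l, hlm⟩ := by simp [hL]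
      have h1 : ∀ c ∈ q ⟨l, hlm⟩, c • (u • y) ∈ F ⟨l, by omega⟩ := by
        intro c hc
        have h2 : ∀ t ∈ ((L.take l).prod : Ideal R), (u * t) • (c • y) ∈ N := by
          intro t ht
          have htc : t * c ∈ ((L.take (l + 1)).prod : Ideal R) := by
            rw [List.prod_take_succ L l (by omega)]
            exact Ideal.mul_mem_mul ht (hgetl ▸ hc)
          have h3 := hyp (t * c) htc
          rw [smul_smul, mul_assoc]
          exact h3
        have h3 := ih (by omega) (c • y) u hu h2
        rw [smul_comm u c y] at h3
        exact h3
      exact mem_of_colon_smul (hfil ⟨l, hlm⟩) h1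
  -- counting the primes
  have hcountT : ∀ (f : Fin n → ℕ) (j : Fin n),
      Multiset.count (p j) (∑ j', Multiset.replicate (f j') (p j')) = f j := by
    intro f j
    simp only [Multiset.count_sum', Multiset.count_replicate]
    rw [Finset.sum_eq_single j]
    · simp
    · intro j' _ hne
      exact if_neg fun h => hne (hdist h)
    · intro habs
      exact absurd (Finset.mem_univ j) habs
  have hcL : ∀ j : Fin n, L.count (p j) = r j := by
    intro j
    have h1 := congrArg (Multiset.count (p j)) hq
    rw [Multiset.coe_count] at h1
    rw [h1, hcountT]
  -- find the last index where `p i` occurs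
  have hpiL : p i ∈ L := by
    rw [← List.count_pos_iff, hcL i]
    exact hr i
  obtain ⟨l₀, hl₀⟩ := Set.mem_range.mp ((List.mem_ofFn' q (p i)).mp (hL ▸ hpiL))
  set S : Finset (Fin m) := Finset.univ.filter (fun l => q l = p i) with hS
  have hSne : S.Nonempty := ⟨l₀, by simp [hS, hl₀]⟩
  set k : Fin m := S.max' hSne with hkdef
  have hk : q k = p i := by
    have := S.max'_mem hSne
    simpa [hS] using this
  have hklast : ∀ l : Fin m, q l = p i → l ≤ k := fun l hl => S.le_max' l (by simp [hS, hl])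
  -- count of `p i` in the various pieces
  have hdropcount : (L.drop ((k : ℕ) + 1)).count (p i) = 0 := by
    rw [List.count_eq_zero]
    intro hmem
    obtain ⟨j, hj, hjeq⟩ := List.mem_iff_getElem.mp hmem
    rw [List.getElem_drop] at hjeq
    have hjlt : (k : ℕ) + 1 + j < m := by
      have := hj
      simp only [List.length_drop, hlen] at this
      omega
    have hjeq' : q ⟨(k : ℕ) + 1 + j, hjlt⟩ = p i := by
      rw [← hjeq]
      simp [hL]
    have := hklast _ hjeq'
    simp only [Fin.le_def] at this
    omega
  have hsplit : ∀ x : Ideal R, (L.take (k : ℕ)).count x + (L.drop (k : ℕ)).count x = L.count x := by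
    intro x
    rw [← List.count_append, List.take_append_drop]
  have hdropk : L.drop (k : ℕ) = q k :: L.drop ((k : ℕ) + 1) := by
    rw [List.drop_eq_getElem_cons (by omega : (k : ℕ) < L.length)]
    congr 1
    simp [hL]
  set mm : Fin n → ℕ := fun j => (L.take (k : ℕ)).count (p j) with hmmdef
  have htakecount_i : mm i = r i - 1 := by
    have h1 := hsplit (p i)
    have h2 : (L.drop ((k : ℕ))).count (p i) = 1 := by
      rw [hdropk, List.count_cons, hdropcount, hk]
      simp
    rw [h2, hcL i] at h1
    have h3 := hr i
    simp only [hmmdef]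
    omega
  have htakecount_le : ∀ j : Fin n, mm j ≤ r j := by
    intro j
    have h1 := hsplit (p j)
    rw [hcL j] at h1
    simp only [hmmdef]
    omega
  -- choose elements `s j ∈ p j \ p i` for `j ≠ i`, using minimality
  have hsj : ∀ j : Fin n, j ≠ i → ∃ c, c ∈ p j ∧ c ∉ p i := by
    intro j hj
    by_contra hcon
    push_neg at hcon
    have hle : p j ≤ p i := fun c hc => hcon c hc
    have hge := hmin.2 ⟨j, rfl⟩ hle
    exact hj (hdist (le_antisymm hle hge))
  choose sel hsel1 hsel2 using hsj
  set sfull : Fin n → R := fun j => if h : j = i then 1 else sel j h with hsfulldef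
  have hsf1 : ∀ j : Fin n, j ≠ i → sfull j ∈ p j := by
    intro j hj
    simp only [hsfulldef, dif_neg hj]
    exact hsel1 j hj
  have hsf2 : ∀ j : Fin n, sfull j ∉ p i := by
    intro j
    by_cases hj : j = i
    · simp only [hsfulldef, dif_pos hj]
      intro hmem
      exact (hprime i).ne_top (Ideal.eq_top_of_isUnit_mem _ hmem isUnit_one)
    · simp only [hsfulldef, dif_neg hj]
      exact hsel2 j hj
  set u : R := ∏ j ∈ Finset.univ.erase i, sfull j ^ (r j - mm j) with hudef
  have hu : u ∉ p i := by
    intro hmem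
    haveI := hprime i
    obtain ⟨j, _, hj⟩ := Ideal.IsPrime.prod_mem_iff.mp hmem
    exact hsf2 j ((hprime i).mem_of_pow_mem _ hj)
  -- the multiset comparison
  set T' : Multiset (Ideal R) := ∑ j, Multiset.replicate (if j = i then r j - 1 else r j) (p j)
    with hT'def
  set U : Multiset (Ideal R) := ∑ j ∈ Finset.univ.erase i, Multiset.replicate (r j - mm j) (p j)
    with hUdef
  have hUcount : ∀ j : Fin n, Multiset.count (p j) U = if j = i then 0 else r j - mm j := by
    intro j
    simp only [hUdef, Multiset.count_sum', Multiset.count_replicate]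
    by_cases hj : j = i
    · subst hj
      rw [if_pos rfl, Finset.sum_eq_zero]
      intro j' hj'
      have h2 : j' ≠ j := (Finset.mem_erase.mp hj').1
      exact if_neg fun h => h2 (hdist h)
    · rw [if_neg hj, Finset.sum_eq_single j]
      · simp
      · intro j' _ hne
        exact if_neg fun h => hne (hdist h)
      · intro habs
        exact absurd (Finset.mem_erase.mpr ⟨hj, Finset.mem_univ j⟩) habs
  have hmultle : T' ≤ (↑(L.take (k : ℕ)) : Multiset (Ideal R)) + U := by
    rw [Multiset.le_iff_count]
    intro x
    by_cases hx : ∃ j : Fin n, p j = x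
    · obtain ⟨j, rfl⟩ := hx
      rw [Multiset.count_add, Multiset.coe_count, hcountT (fun j => if j = i then r j - 1 else r j) j,
        hUcount j]
      by_cases hj : j = i
      · subst hj
        rw [if_pos rfl, if_pos rfl]
        have := htakecount_i
        simp only [hmmdef] at this
        omega
      · rw [if_neg hj, if_neg hj]
        have h1 := htakecount_le j
        simp only [hmmdef] at h1 ⊢
        omega
    · push_neg at hx
      have : Multiset.count x T' = 0 := by
        simp only [hT'def, Multiset.count_sum', Multiset.count_replicate]
        exact Finset.sum_eq_zero fun j _ => if_neg (hx j)
      rw [this]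
      exact Nat.zero_le _
  have hprodle : ((↑(L.take (k : ℕ)) : Multiset (Ideal R)) + U).prod ≤ T'.prod := by
    obtain ⟨w, hw⟩ := Multiset.le_iff_exists_add.mp hmultle
    rw [hw, Multiset.prod_add]
    exact Ideal.mul_le_left
  have hT'prod : T'.prod = ∏ j, p j ^ (if j = i then r j - 1 else r j) := by
    rw [hT'def, Multiset.prod_sum]
    simp [Multiset.prod_replicate]
  have hUprod : U.prod = ∏ j ∈ Finset.univ.erase i, p j ^ (r j - mm j) := by
    rw [hUdef, Multiset.prod_sum]
    simp [Multiset.prod_replicate]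
  have huU : u ∈ U.prod := by
    rw [hUprod, hudef]
    exact Ideal.prod_mem_prod fun j hj =>
      Ideal.pow_mem_pow (hsf1 j (Finset.mem_erase.mp hj).1) _
  have hut : ∀ t ∈ ((L.take (k : ℕ)).prod : Ideal R), u * t ∈ ∏ j, p j ^ r j := by
    intro t ht
    have h1 : t * u ∈ ((↑(L.take (k : ℕ)) : Multiset (Ideal R)).prod * U.prod) :=
      Ideal.mul_mem_mul (by rwa [Multiset.prod_coe]) huU
    rw [← Multiset.prod_add] at h1
    have h2 := hprodle h1
    rw [hT'prod, heq] at h2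
    rwa [mul_comm]
  -- conclude
  obtain ⟨x, hx1, hx2⟩ := SetLike.exists_of_lt (hlt k)
  have hux : u • x ∈ F ⟨(k : ℕ), by omega⟩ := by
    apply hrec (k : ℕ) (le_of_lt k.isLt) x u hu
    intro t ht
    have h3 : u * t ∈ (L.prod : Ideal R) := by
      rw [hLprod]
      exact hut t ht
    have h4 := hdesc m 0 (by omega) x (u * t) (by rwa [List.drop_zero])
    have h0 : F ⟨0, by omega⟩ = N := hF0
    rw [← h0]
    exact h4
  rcases (hfil k).1.2.1.2.2 u x hx1 hux with h | h
  · exact hx2 h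
  · rw [hk] at h
    exact hu h
end

section
/- Let R = k[x,y,z]/(xy − z, yz − x), p = (x̄, ȳ, z̄) and q = (x̄, z̄), which are prime ideals of R with q ⊂ p and pq = q. Let M = R/q ⊕ R/q and N = p/q ⊕ 0. Then N ⊂^{p} R/q ⊕ 0 ⊂^{q} M is a regular prime extension filtration, so P_M(N) = pq, and pq = q. -/
variable {R : Type*} [CommRing R] {M : Type*} [AddCommGroup M] [Module R M]

section AuxPoly
open MvPolynomial

noncomputable def gvAux (k : Type*) [CommRing k] : Fin 3 → MvPolynomial (Fin 3) k :=
  fun i => if i = 1 then X 1 else 0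

lemma gvAux0 (k : Type*) [CommRing k] : gvAux k 0 = 0 := if_neg (by decide)
lemma gvAux1 (k : Type*) [CommRing k] : gvAux k 1 = X 1 := if_pos rfl
lemma gvAux2 (k : Type*) [CommRing k] : gvAux k 2 = 0 := if_neg (by decide)

lemma subQAux (k : Type*) [CommRing k] (g : MvPolynomial (Fin 3) k) :
    g - aeval (R := k) (gvAux k) g ∈ Ideal.span {X 0, X 2} := by
  induction g using MvPolynomial.induction_on with
  | C a => simp
  | add u v hu hv =>
      have := Ideal.add_mem _ hu hv
      convert this using 1
      rw [map_add]; ring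
  | mul_X u i hu =>
      have key : u * X i - aeval (R := k) (gvAux k) (u * X i)
          = u * (X i - aeval (R := k) (gvAux k) (X i))
            + (u - aeval (R := k) (gvAux k) u) * aeval (R := k) (gvAux k) (X i) := by
        rw [map_mul]; ring
      rw [key]
      refine Ideal.add_mem _ (Ideal.mul_mem_left _ _ ?_) (Ideal.mul_mem_right _ _ hu)
      rw [aeval_X]
      match i with
      | 0 => rw [gvAux0, sub_zero]; exact Ideal.subset_span (Set.mem_insert _ _)
      | 1 => rw [gvAux1, sub_self]; exact Ideal.zero_mem _
      | 2 => rw [gvAux2, sub_zero]; exact Ideal.subset_span (Set.mem_insert_of_mem _ rfl)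

lemma subPAux (k : Type*) [CommRing k] (g : MvPolynomial (Fin 3) k) :
    g - C (eval (0 : Fin 3 → k) g) ∈ Ideal.span {X 0, X 1, X 2} := by
  induction g using MvPolynomial.induction_on with
  | C a => simp
  | add u v hu hv =>
      have := Ideal.add_mem _ hu hv
      convert this using 1
      rw [map_add, map_add]; ring
  | mul_X u i hu =>
      have h0 : eval (0 : Fin 3 → k) (u * X i) = 0 := by simp
      rw [h0, map_zero, sub_zero]
      refine Ideal.mul_mem_left _ _ ?_
      match i with
      | 0 => exact Ideal.subset_span (Set.mem_insert _ _)
      | 1 => exact Ideal.subset_span (Set.mem_insert_of_mem _ (Set.mem_insert _ _))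
      | 2 => exact Ideal.subset_span (Set.mem_insert_of_mem _ (Set.mem_insert_of_mem _ rfl))

lemma memQAux (k : Type*) [CommRing k] (g : MvPolynomial (Fin 3) k) :
    g ∈ Ideal.span {X 0, X 2} ↔ aeval (R := k) (gvAux k) g = 0 := by
  constructor
  · intro h
    have hle : Ideal.span {(X 0 : MvPolynomial (Fin 3) k), X 2}
        ≤ RingHom.ker ((aeval (R := k) (gvAux k)).toRingHom) := by
      rw [Ideal.span_le]
      rintro x hx
      simp only [Set.mem_insert_iff, Set.mem_singleton_iff] at hx
      rcases hx with rfl | rfl <;>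
        simp [RingHom.mem_ker, gvAux0, gvAux2]
    exact hle h
  · intro h0
    have := subQAux k g
    rwa [h0, sub_zero] at this

lemma isPrimeQAux (k : Type*) [Field k] :
    (Ideal.span {X 0, X 2} : Ideal (MvPolynomial (Fin 3) k)).IsPrime := by
  rw [Ideal.isPrime_iff]
  constructor
  · intro h
    have := (memQAux k 1).mp (h ▸ Submodule.mem_top)
    simp at this
  · intro x y hxy
    rw [memQAux] at hxy
    rw [map_mul] at hxy
    rcases mul_eq_zero.mp hxy with h | h
    · exact Or.inl ((memQAux k x).mpr h)
    · exact Or.inr ((memQAux k y).mpr h)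

lemma memPAux (k : Type*) [CommRing k] :
    (Ideal.span {X 0, X 1, X 2} : Ideal (MvPolynomial (Fin 3) k))
      = RingHom.ker (eval (0 : Fin 3 → k)) := by
  apply le_antisymm
  · rw [Ideal.span_le]
    rintro x hx
    simp only [Set.mem_insert_iff, Set.mem_singleton_iff] at hx
    rcases hx with rfl | rfl | rfl <;> simp [RingHom.mem_ker]
  · intro g hg
    have := subPAux k g
    rw [RingHom.mem_ker] at hg
    rwa [hg, map_zero, sub_zero] at this

lemma isMaximalPAux (k : Type*) [Field k] :
    (Ideal.span {X 0, X 1, X 2} : Ideal (MvPolynomial (Fin 3) k)).IsMaximal := by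
  rw [memPAux]
  exact RingHom.ker_isMaximal_of_surjective _ (fun a => ⟨C a, eval_C _⟩)

lemma X1notQAux (k : Type*) [Field k] :
    (X 1 : MvPolynomial (Fin 3) k) ∉ Ideal.span {X 0, X 2} := by
  rw [memQAux, aeval_X, gvAux1]
  exact X_ne_zero _

end AuxPoly

open MvPolynomial in
/-- In `R = k[x,y,z]/(xy − z, yz − x)` with `p = (x̄,ȳ,z̄)` and `q = (x̄,z̄)`: `p`, `q`
are prime, `q ⊂ p`, `pq = q`, and for `M = R/q ⊕ R/q`, `N = p/q ⊕ 0` the chain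
`N ⊂^p R/q ⊕ 0 ⊂^q M` is an RPE filtration, so `P_M(N) = pq` while `pq = q`. -/
theorem gpif_nonminimal_example (k : Type*) [Field k]
    (R : Type*) [CommRing R] [IsNoetherianRing R]
    (f : MvPolynomial (Fin 3) k →+* R) (hf : Function.Surjective f)
    (hker : RingHom.ker f = Ideal.span {X 0 * X 1 - X 2, X 1 * X 2 - X 0})
    (p q : Ideal R) (hp : p = (Ideal.span {X 0, X 1, X 2}).map f)
    (hq : q = (Ideal.span {X 0, X 2}).map f)
    (N : Submodule R ((R ⧸ (q : Submodule R R)) × (R ⧸ (q : Submodule R R))))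
    (hN : N = (Submodule.map (q : Submodule R R).mkQ (p : Submodule R R)).prod ⊥) :
    p.IsPrime ∧ q.IsPrime ∧ q < p ∧ p * q = q ∧
      IsRegularPrimeExtIn ⊤ p N ((⊤ : Submodule R (R ⧸ (q : Submodule R R))).prod (⊥ : Submodule R (R ⧸ (q : Submodule R R)))) ∧
      IsRegularPrimeExtIn ⊤ q ((⊤ : Submodule R (R ⧸ (q : Submodule R R))).prod (⊥ : Submodule R (R ⧸ (q : Submodule R R)))) ⊤ ∧
      HasGPIF N ⊤ {p, q} := by
  classical
  have hX0Q : (X 0 : MvPolynomial (Fin 3) k) ∈ Ideal.span {X 0, X 2} :=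
    Ideal.subset_span (Set.mem_insert _ _)
  have hX2Q : (X 2 : MvPolynomial (Fin 3) k) ∈ Ideal.span {X 0, X 2} :=
    Ideal.subset_span (Set.mem_insert_of_mem _ rfl)
  have hkerQ : RingHom.ker f ≤ Ideal.span {X 0, X 2} := by
    rw [hker, Ideal.span_le]
    rintro x hx
    simp only [Set.mem_insert_iff, Set.mem_singleton_iff] at hx
    rcases hx with rfl | rfl
    · exact sub_mem (Ideal.mul_mem_right _ _ hX0Q) hX2Q
    · exact sub_mem (Ideal.mul_mem_left _ _ hX2Q) hX0Q
  have hQP : (Ideal.span {X 0, X 2} : Ideal (MvPolynomial (Fin 3) k))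
      ≤ Ideal.span {X 0, X 1, X 2} := by
    rw [Ideal.span_le]
    rintro x hx
    simp only [Set.mem_insert_iff, Set.mem_singleton_iff] at hx
    rcases hx with rfl | rfl
    · exact Ideal.subset_span (Set.mem_insert _ _)
    · exact Ideal.subset_span (Set.mem_insert_of_mem _ (Set.mem_insert_of_mem _ rfl))
  have hqprime : q.IsPrime := by
    rw [hq]
    haveI := isPrimeQAux k
    exact Ideal.map_isPrime_of_surjective hf hkerQ
  have hpmax : p.IsMaximal := by
    rw [hp]
    rcases Ideal.map_eq_top_or_isMaximal_of_surjective f hf (isMaximalPAux k) with h | h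
    · exfalso
      have h2 := congrArg (Ideal.comap f) h
      rw [Ideal.comap_map_of_surjective f hf, Ideal.comap_top, ← RingHom.ker_eq_comap_bot,
        sup_eq_left.mpr (hkerQ.trans hQP)] at h2
      exact (isMaximalPAux k).ne_top h2
    · exact h
  have hpprime : p.IsPrime := hpmax.isPrime
  have hqlep : q ≤ p := by rw [hp, hq]; exact Ideal.map_mono hQP
  have hX1p : f (X 1) ∈ p := by
    rw [hp]
    exact Ideal.mem_map_of_mem f
      (Ideal.subset_span (Set.mem_insert_of_mem _ (Set.mem_insert _ _)))
  have hX0q : f (X 0) ∈ q := by rw [hq]; exact Ideal.mem_map_of_mem f hX0Q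
  have hX2q : f (X 2) ∈ q := by rw [hq]; exact Ideal.mem_map_of_mem f hX2Q
  have hX1q : f (X 1) ∉ q := by
    rw [hq]
    intro h
    have h2 : X 1 ∈ Ideal.comap f ((Ideal.span {X 0, X 2}).map f) := h
    rw [Ideal.comap_map_of_surjective f hf, ← RingHom.ker_eq_comap_bot,
      sup_eq_left.mpr hkerQ] at h2
    exact X1notQAux k h2
  have hqltp : q < p := lt_of_le_of_ne hqlep (fun h => hX1q (h.symm ▸ hX1p))
  have hfX0 : f (X 0) = f (X 1) * f (X 2) := by
    have h1 : f (X 1 * X 2 - X 0) = 0 := by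
      rw [← RingHom.mem_ker, hker]
      exact Ideal.subset_span (Set.mem_insert_of_mem _ rfl)
    rw [map_sub, map_mul, sub_eq_zero] at h1
    exact h1.symm
  have hfX2 : f (X 2) = f (X 0) * f (X 1) := by
    have h1 : f (X 0 * X 1 - X 2) = 0 := by
      rw [← RingHom.mem_ker, hker]
      exact Ideal.subset_span (Set.mem_insert _ _)
    rw [map_sub, map_mul, sub_eq_zero] at h1
    exact h1.symm
  have hpq : p * q = q := by
    refine le_antisymm Ideal.mul_le_right ?_
    have hmem0 : f (X 0) ∈ p * q := by rw [hfX0]; exact Ideal.mul_mem_mul hX1p hX2q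
    have hmem2 : f (X 2) ∈ p * q := by rw [hfX2, mul_comm (f (X 0)) (f (X 1))]; exact Ideal.mul_mem_mul hX1p hX0q
    nth_rewrite 1 [hq]
    rw [Ideal.map_span, Set.image_insert_eq, Set.image_singleton, Ideal.span_le]
    rintro x hx
    simp only [Set.mem_insert_iff, Set.mem_singleton_iff] at hx
    rcases hx with rfl | rfl
    · exact hmem0
    · exact hmem2
  -- module-level preliminaries
  have hp_ne_top : (1 : R) ∉ p := fun h => hpprime.ne_top ((Ideal.eq_top_iff_one p).mpr h)
  have hq_ne_top : (1 : R) ∉ q := fun h => hqprime.ne_top ((Ideal.eq_top_iff_one q).mpr h)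
  have hsmul : ∀ a b : R, a • (Submodule.Quotient.mk b : R ⧸ (q : Submodule R R))
      = Submodule.Quotient.mk (a * b) := by
    intro a b
    rw [← Submodule.Quotient.mk_smul, smul_eq_mul]
  have hzero : ∀ b : R, (Submodule.Quotient.mk b : R ⧸ (q : Submodule R R)) = 0 ↔ b ∈ q :=
    fun b => Submodule.Quotient.mk_eq_zero _
  have hmemNp : ∀ b : R, (Submodule.Quotient.mk b : R ⧸ (q : Submodule R R))
      ∈ Submodule.map (q : Submodule R R).mkQ (p : Submodule R R) ↔ b ∈ p := by
    intro b
    constructor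
    · intro h
      have h2 : b ∈ Submodule.comap (q : Submodule R R).mkQ
          (Submodule.map (q : Submodule R R).mkQ (p : Submodule R R)) := h
      rw [Submodule.comap_map_eq, Submodule.ker_mkQ, sup_eq_left.mpr hqlep] at h2
      exact h2
    · intro h
      exact ⟨b, h, rfl⟩
  have hsurjQ := Submodule.Quotient.mk_surjective (q : Submodule R R)
  have eAss : ∀ N' : Submodule R ((R ⧸ (q : Submodule R R)) × (R ⧸ (q : Submodule R R))),
      assOf R N' ⊤
        = associatedPrimes R (((R ⧸ (q : Submodule R R)) × (R ⧸ (q : Submodule R R))) ⧸ N') :=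
    fun N' => LinearEquiv.AssociatedPrimes.eq
      ((LinearEquiv.ofEq _ _ (by rw [Submodule.map_top, Submodule.range_mkQ])).trans
        Submodule.topEquiv)
  have step1 : IsRegularPrimeExtIn ⊤ p N
      ((⊤ : Submodule R (R ⧸ (q : Submodule R R))).prod (⊥ : Submodule R (R ⧸ (q : Submodule R R)))) := by
    constructor
    · refine ⟨le_top, ⟨?_, ?_, ?_⟩, ?_⟩
      · rw [SetLike.lt_iff_le_and_exists]
        constructor
        · rw [hN]; exact Submodule.prod_mono le_top le_rfl
        · refine ⟨(Submodule.Quotient.mk 1, 0),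
            Submodule.mem_prod.mpr ⟨trivial, Submodule.zero_mem _⟩, ?_⟩
          intro hmem
          rw [hN, Submodule.mem_prod] at hmem
          exact hp_ne_top ((hmemNp 1).mp hmem.1)
      · ext r
        rw [Submodule.mem_colon]
        constructor
        · intro h
          have h2 := h (Submodule.Quotient.mk 1, 0)
            (Submodule.mem_prod.mpr ⟨trivial, Submodule.zero_mem _⟩)
          rw [hN, Prod.smul_mk, Submodule.mem_prod, hsmul, mul_one] at h2
          exact (hmemNp r).mp h2.1
        · intro hr y hy
          obtain ⟨u, v⟩ := y
          rw [SetLike.mem_coe, Submodule.mem_prod] at hy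
          have hv : v = 0 := (Submodule.mem_bot R).mp hy.2
          subst hv
          obtain ⟨b, rfl⟩ := hsurjQ u
          rw [hN, Prod.smul_mk, smul_zero, Submodule.mem_prod, hsmul]
          exact ⟨(hmemNp _).mpr (Ideal.mul_mem_right b p hr), Submodule.zero_mem _⟩
      · intro a x hx hax
        obtain ⟨u, v⟩ := x
        rw [Submodule.mem_prod] at hx
        have hv : v = 0 := (Submodule.mem_bot R).mp hx.2
        subst hv
        obtain ⟨b, rfl⟩ := hsurjQ u
        rw [hN, Prod.smul_mk, smul_zero, Submodule.mem_prod, hsmul] at hax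
        rcases hpprime.mem_or_mem ((hmemNp _).mp hax.1) with h | h
        · exact Or.inr h
        · refine Or.inl ?_
          rw [hN, Submodule.mem_prod]
          exact ⟨(hmemNp b).mpr h, Submodule.zero_mem _⟩
      · intro L hL hLpe hlt
        obtain ⟨x, hxL, hxB⟩ := SetLike.exists_of_lt hlt
        obtain ⟨u, v⟩ := x
        have hv : v ≠ 0 := by
          intro h
          exact hxB (Submodule.mem_prod.mpr ⟨trivial, by rw [h]; exact Submodule.zero_mem _⟩)
        obtain ⟨b, rfl⟩ := hsurjQ v
        have hcol : f (X 1) ∈ Submodule.colon N L := by rw [hLpe.2.1]; exact hX1p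
        have h2 := Submodule.mem_colon.mp hcol (u, Submodule.Quotient.mk b) hxL
        rw [hN, Prod.smul_mk, Submodule.mem_prod, hsmul] at h2
        rcases hqprime.mem_or_mem ((hzero _).mp ((Submodule.mem_bot R).mp h2.2)) with h | h
        · exact hX1q h
        · exact hv ((hzero b).mpr h)
    · constructor
      · show p ∈ assOf R N ⊤
        rw [eAss]
        refine (isAssociatedPrime_iff).mpr ⟨hpprime, N.mkQ (Submodule.Quotient.mk 1, 0), ?_⟩
        ext a
        rw [Submodule.mem_colon_singleton, Submodule.mem_bot, ← map_smul, Prod.smul_mk, hsmul,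
          mul_one, smul_zero, Submodule.mkQ_apply, Submodule.Quotient.mk_eq_zero, hN,
          Submodule.mem_prod]
        constructor
        · intro h; exact ⟨(hmemNp a).mpr h, Submodule.zero_mem _⟩
        · intro h; exact (hmemNp a).mp h.1
      · intro I hI hle
        rw [eAss] at hI
        exact (hpmax.eq_of_le hI.isPrime.ne_top hle).ge
  have step2 : IsRegularPrimeExtIn ⊤ q
      ((⊤ : Submodule R (R ⧸ (q : Submodule R R))).prod (⊥ : Submodule R (R ⧸ (q : Submodule R R)))) ⊤ := by
    constructor
    · refine ⟨le_top, ⟨?_, ?_, ?_⟩, ?_⟩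
      · rw [SetLike.lt_iff_le_and_exists]
        refine ⟨le_top, (0, Submodule.Quotient.mk 1), trivial, ?_⟩
        intro hmem
        rw [Submodule.mem_prod] at hmem
        exact hq_ne_top ((hzero 1).mp ((Submodule.mem_bot R).mp hmem.2))
      · ext r
        rw [Submodule.mem_colon]
        constructor
        · intro h
          have h2 := h (0, Submodule.Quotient.mk 1) trivial
          rw [Prod.smul_mk, Submodule.mem_prod, hsmul, mul_one] at h2
          exact (hzero r).mp ((Submodule.mem_bot R).mp h2.2)
        · intro hr y _
          obtain ⟨u, v⟩ := y
          obtain ⟨b, rfl⟩ := hsurjQ v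
          rw [Prod.smul_mk, Submodule.mem_prod, hsmul]
          exact ⟨trivial, (Submodule.mem_bot R).mpr ((hzero _).mpr (Ideal.mul_mem_right b q hr))⟩
      · intro a x _ hax
        obtain ⟨u, v⟩ := x
        obtain ⟨b, rfl⟩ := hsurjQ v
        rw [Prod.smul_mk, Submodule.mem_prod, hsmul] at hax
        rcases hqprime.mem_or_mem ((hzero _).mp ((Submodule.mem_bot R).mp hax.2)) with h | h
        · exact Or.inr h
        · exact Or.inl (Submodule.mem_prod.mpr
            ⟨trivial, (Submodule.mem_bot R).mpr ((hzero b).mpr h)⟩)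
      · intro L hL _ hlt
        exact absurd (lt_of_lt_of_le hlt hL) (lt_irrefl ⊤)
    · constructor
      · show q ∈ assOf R _ ⊤
        rw [eAss]
        refine (isAssociatedPrime_iff).mpr ⟨hqprime,
          ((⊤ : Submodule R (R ⧸ (q : Submodule R R))).prod (⊥ : Submodule R (R ⧸ (q : Submodule R R)))).mkQ (0, Submodule.Quotient.mk 1), ?_⟩
        ext a
        rw [Submodule.mem_colon_singleton, Submodule.mem_bot, ← map_smul, Prod.smul_mk, hsmul,
          mul_one, smul_zero, Submodule.mkQ_apply, Submodule.Quotient.mk_eq_zero,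
          Submodule.mem_prod]
        constructor
        · intro h; exact ⟨trivial, (Submodule.mem_bot R).mpr ((hzero a).mpr h)⟩
        · intro h; exact (hzero a).mp ((Submodule.mem_bot R).mp h.2)
      · intro I hI hle
        rw [eAss] at hI
        obtain ⟨hIprime, x, hx⟩ := (isAssociatedPrime_iff).mp hI
        obtain ⟨y, rfl⟩ := Submodule.mkQ_surjective _ x
        obtain ⟨u, v⟩ := y
        obtain ⟨b, rfl⟩ := hsurjQ v
        by_cases hbq : b ∈ q
        · exfalso
          have hx0 : ((⊤ : Submodule R (R ⧸ (q : Submodule R R))).prod (⊥ : Submodule R (R ⧸ (q : Submodule R R)))).mkQ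
              (u, Submodule.Quotient.mk b) = 0 := by
            rw [Submodule.mkQ_apply, Submodule.Quotient.mk_eq_zero, Submodule.mem_prod]
            exact ⟨trivial, (Submodule.mem_bot R).mpr ((hzero b).mpr hbq)⟩
          rw [hx0] at hx
          apply hIprime.ne_top
          rw [hx]
          ext a
          simp [Submodule.mem_annihilator_span_singleton, Submodule.annihilator_bot]
        · intro a ha
          rw [hx, Submodule.mem_colon_singleton, Submodule.mem_bot, ← map_smul, Prod.smul_mk, hsmul,
            Submodule.mkQ_apply, Submodule.Quotient.mk_eq_zero, Submodule.mem_prod] at ha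
          have hab : a * b ∈ q := (hzero _).mp ((Submodule.mem_bot R).mp ha.2)
          exact (hqprime.mem_or_mem hab).resolve_right hbq
  refine ⟨hpprime, hqprime, hqltp, hpq, step1, step2, ?_⟩
  refine ⟨2, ![N, (⊤ : Submodule R (R ⧸ (q : Submodule R R))).prod (⊥ : Submodule R (R ⧸ (q : Submodule R R))), ⊤], ![p, q],
    rfl, rfl, ?_, ?_⟩
  · intro i
    match i with
    | 0 => exact step1
    | 1 => exact step2
  · rfl
end

section
/- Let R be a commutative Noetherian ring, N ⊆ M and N′ ⊆ M′ submodules of finitely generated R-modules, p a prime ideal with p ∉ Ass_R(M′/N′) and p a maximal element of Ass_R(M/N) ∪ Ass_R(M′/N′). If N ⊂^{p} K is a regular p-prime extension in M, then N ⊕ N′ ⊂^{p} K ⊕ N′ is a regular p-prime extension in M ⊕ M′. -/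
variable {R : Type*} [CommRing R] {M : Type*} [AddCommGroup M] [Module R M]

section Aux

variable {M' : Type*} [AddCommGroup M'] [Module R M']

lemma assOf_top_eq (N : Submodule R M) : assOf R N ⊤ = associatedPrimes R (M ⧸ N) := by
  have h : (⊤ : Submodule R M).map N.mkQ = ⊤ := by
    rw [Submodule.map_top, Submodule.range_mkQ]
  exact LinearEquiv.AssociatedPrimes.eq ((LinearEquiv.ofEq _ _ h).trans Submodule.topEquiv)

lemma associatedPrimes_prod_eq :
    associatedPrimes R (M × M') = associatedPrimes R M ∪ associatedPrimes R M' := by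
  apply le_antisymm
  · rintro q ⟨hq, z, hz⟩
    by_cases h1 : q = ((⊥ : Submodule R M).colon {z.1}).radical
    · exact Or.inl ⟨hq, z.1, h1⟩
    by_cases h2 : q = ((⊥ : Submodule R M').colon {z.2}).radical
    · exact Or.inr ⟨hq, z.2, h2⟩
    exfalso
    have hle1 : q ≤ ((⊥ : Submodule R M).colon {z.1}).radical := by
      intro a ha
      rw [hz, Ideal.mem_radical_iff] at ha
      obtain ⟨n, ha⟩ := ha
      simp only [Submodule.mem_colon_singleton, Submodule.mem_bot] at ha
      rw [Ideal.mem_radical_iff]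
      refine ⟨n, ?_⟩
      simp only [Submodule.mem_colon_singleton, Submodule.mem_bot]
      exact congrArg Prod.fst ha
    have hle2 : q ≤ ((⊥ : Submodule R M').colon {z.2}).radical := by
      intro a ha
      rw [hz, Ideal.mem_radical_iff] at ha
      obtain ⟨n, ha⟩ := ha
      simp only [Submodule.mem_colon_singleton, Submodule.mem_bot] at ha
      rw [Ideal.mem_radical_iff]
      refine ⟨n, ?_⟩
      simp only [Submodule.mem_colon_singleton, Submodule.mem_bot]
      exact congrArg Prod.snd ha
    obtain ⟨a, ha, haq⟩ := SetLike.exists_of_lt (lt_of_le_of_ne hle1 h1 : q < _)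
    obtain ⟨b, hb, hbq⟩ := SetLike.exists_of_lt (lt_of_le_of_ne hle2 h2 : q < _)
    rw [Ideal.mem_radical_iff] at ha hb
    obtain ⟨m, ha⟩ := ha
    obtain ⟨n, hb⟩ := hb
    simp only [Submodule.mem_colon_singleton, Submodule.mem_bot] at ha hb
    have hab : a * b ∈ q := by
      rw [hz, Ideal.mem_radical_iff]
      refine ⟨m + n, ?_⟩
      simp only [Submodule.mem_colon_singleton, Submodule.mem_bot]
      have e1 : (a * b) ^ (m + n) = (a ^ n * b ^ (m + n)) * a ^ m := by ring
      have e2 : (a * b) ^ (m + n) = (a ^ (m + n) * b ^ m) * b ^ n := by ring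
      have h1' : (a * b) ^ (m + n) • z.1 = 0 := by rw [e1, mul_smul, ha, smul_zero]
      have h2' : (a * b) ^ (m + n) • z.2 = 0 := by rw [e2, mul_smul, hb, smul_zero]
      exact Prod.ext h1' h2'
    rcases hq.mem_or_mem hab with h | h
    · exact haq h
    · exact hbq h
  · rintro q (hq | hq)
    · exact hq.map_of_injective (LinearMap.inl R M M') LinearMap.inl_injective
    · exact hq.map_of_injective (LinearMap.inr R M M') LinearMap.inr_injective

/-- The quotient of a product by a product of submodules. -/
noncomputable def quotProdEquiv (N : Submodule R M) (N' : Submodule R M') :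
    ((M × M') ⧸ N.prod N') ≃ₗ[R] (M ⧸ N) × (M' ⧸ N') :=
  (Submodule.quotEquivOfEq _ _ (by rw [LinearMap.ker_prodMap, Submodule.ker_mkQ,
      Submodule.ker_mkQ])).symm.trans <|
    (N.mkQ.prodMap N'.mkQ).quotKerEquivOfSurjective
      (Prod.map_surjective.mpr ⟨N.mkQ_surjective, N'.mkQ_surjective⟩)

lemma assOf_prod_top_eq (N : Submodule R M) (N' : Submodule R M') :
    assOf R (N.prod N') (⊤ : Submodule R (M × M')) =
      associatedPrimes R (M ⧸ N) ∪ associatedPrimes R (M' ⧸ N') := by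
  rw [assOf_top_eq, LinearEquiv.AssociatedPrimes.eq (quotProdEquiv N N'),
    associatedPrimes_prod_eq]

end Aux

/-- If `p ∉ Ass (M'/N')`, `p` is a maximal element of `Ass (M/N) ∪ Ass (M'/N')`, and
`N ⊂^p K` is a regular `p`-prime extension in `M`, then `N ⊕ N' ⊂^p K ⊕ N'` is a
regular `p`-prime extension in `M ⊕ M'`. -/
theorem regular_prime_ext_prod_right_const {R : Type*} [CommRing R] [IsNoetherianRing R]
    {M : Type*} [AddCommGroup M] [Module R M] [Module.Finite R M]
    {M' : Type*} [AddCommGroup M'] [Module R M'] [Module.Finite R M']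
    (p : Ideal R) (hp : p.IsPrime)
    (N K : Submodule R M) (N' : Submodule R M')
    (hnot : p ∉ associatedPrimes R (M' ⧸ N'))
    (hmax : Maximal (· ∈ associatedPrimes R (M ⧸ N) ∪ associatedPrimes R (M' ⧸ N')) p)
    (h : IsRegularPrimeExtIn ⊤ p N K) :
    IsRegularPrimeExtIn ⊤ p (N.prod N') (K.prod N') := by
  obtain ⟨⟨-, ⟨hNK, hcol, hprime⟩, hmaxL⟩, -⟩ := h
  obtain ⟨x₀, hx₀K, hx₀N⟩ := SetLike.exists_of_lt hNK
  constructor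
  · refine ⟨le_top, ⟨?_, ?_, ?_⟩, ?_⟩
    · -- N.prod N' < K.prod N'
      refine lt_of_le_of_ne (Submodule.prod_mono hNK.le le_rfl) (fun he => hx₀N ?_)
      have : (x₀, (0 : M')) ∈ N.prod N' := he ▸ ⟨hx₀K, N'.zero_mem⟩
      exact this.1
    · -- colon
      ext a
      rw [Submodule.mem_colon]
      constructor
      · intro ha
        rw [← hcol, Submodule.mem_colon]
        intro x hx
        exact (ha (x, 0) ⟨hx, N'.zero_mem⟩).1
      · intro ha z hz
        rw [← hcol] at ha
        exact ⟨Submodule.mem_colon.mp ha z.1 hz.1, N'.smul_mem a hz.2⟩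
    · -- primality
      intro a z hz haz
      rcases hprime a z.1 hz.1 haz.1 with hx | hap
      · exact Or.inl ⟨hx, hz.2⟩
      · exact Or.inr hap
    · -- maximality
      intro L _ hL hKL
      -- Step 1: second coordinates of L lie in N'
      have hLsnd : ∀ z ∈ L, Prod.snd z ∈ N' := by
        intro z hzL
        by_contra hz2
        have hy0 : N'.mkQ z.2 ≠ 0 := by
          simpa [Submodule.Quotient.mk_eq_zero] using hz2
        obtain ⟨P, hP, hlP⟩ := exists_le_isAssociatedPrime_of_isNoetherianRing R (N'.mkQ z.2) hy0
        have hpP : p ≤ P := by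
          refine le_trans (fun a ha => ?_) hlP
          rw [Submodule.mem_colon_singleton, Submodule.mem_bot]
          have haL : a ∈ (N.prod N').colon L := hL.2.1 ▸ ha
          have haz : a • z ∈ N.prod N' := Submodule.mem_colon.mp haL z hzL
          have : a • N'.mkQ z.2 = N'.mkQ (a • z.2) := (map_smul _ a _).symm
          rw [this, Submodule.mkQ_apply]
          exact (Submodule.Quotient.mk_eq_zero N').mpr haz.2
        have hPu : P ∈ associatedPrimes R (M ⧸ N) ∪ associatedPrimes R (M' ⧸ N') :=
          Or.inr hP
        have : P = p := le_antisymm (hmax.2 hPu hpP) hpP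
        exact hnot (this ▸ hP)
      -- Step 2: L = L₁.prod N'
      set L₁ := L.map (LinearMap.fst R M M') with hL₁def
      have hKN'L : K.prod N' ≤ L := hKL.le
      have hLeq : L = L₁.prod N' := by
        apply le_antisymm
        · intro z hz
          exact ⟨⟨z, hz, rfl⟩, hLsnd z hz⟩
        · rintro ⟨x, y⟩ ⟨⟨w, hwL, hwx⟩, hy⟩
          have h0 : ((0 : M), y - w.2) ∈ L :=
            hKN'L ⟨K.zero_mem, N'.sub_mem hy (hLsnd w hwL)⟩
          have hwx' : w.1 = x := hwx
          have : (x, y) = w + ((0 : M), y - w.2) := by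
            rw [Prod.ext_iff]
            constructor <;> simp [hwx']
          rw [this]
          exact L.add_mem hwL h0
      -- Step 3: IsPrimeExt p N L₁
      obtain ⟨z, hzL, hzK⟩ := SetLike.exists_of_lt hKL
      have hz1K : z.1 ∉ K := fun hc => hzK ⟨hc, hLsnd z hzL⟩
      have hz1L₁ : z.1 ∈ L₁ := ⟨z, hzL, rfl⟩
      have hNL₁ : N ≤ L₁ := by
        intro x hx
        exact ⟨(x, 0), hKN'L ⟨hNK.le hx, N'.zero_mem⟩, rfl⟩
      have hPE₁ : IsPrimeExt p N L₁ := by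
        refine ⟨lt_of_le_of_ne hNL₁ (fun he => hz1K (hNK.le (he ▸ hz1L₁))), ?_, ?_⟩
        · ext a
          rw [Submodule.mem_colon]
          constructor
          · intro ha
            rw [← hL.2.1, Submodule.mem_colon]
            intro w hwL
            rw [hLeq] at hwL
            exact ⟨ha w.1 hwL.1, N'.smul_mem a hwL.2⟩
          · intro ha x hx
            have hxL : (x, (0 : M')) ∈ L := by rw [hLeq]; exact ⟨hx, N'.zero_mem⟩
            have haL : a ∈ (N.prod N').colon L := hL.2.1 ▸ ha
            exact (Submodule.mem_colon.mp haL (x, 0) hxL).1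
        · intro a x hx hax
          have hxL : (x, (0 : M')) ∈ L := by rw [hLeq]; exact ⟨hx, N'.zero_mem⟩
          have : a • ((x, (0 : M')) : M × M') ∈ N.prod N' := ⟨hax, by simp⟩
          rcases hL.2.2 a (x, 0) hxL this with hmem | hap
          · exact Or.inl hmem.1
          · exact Or.inr hap
      -- Step 4: contradiction with maximality of K
      have hKL₁ : K < L₁ := by
        refine lt_of_le_of_ne (fun x hx => ⟨(x, 0), hKN'L ⟨hx, N'.zero_mem⟩, rfl⟩)
          (fun he => hz1K (he ▸ hz1L₁))
      exact hmaxL L₁ le_top hPE₁ hKL₁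
  · rw [assOf_prod_top_eq]
    exact hmax
end
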